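/- arXiv:2011.11223 — 7 statements merged into one kernel-verified Lean document; each statement's English description precedes it below -/
import Mathlib

section
/- Let G = (V, E) be a connected, undirected, unweighted finite graph, let A be a complex matrix indexed by V with geodesic-width ω(A), let P_A be its diagonal preconditioning matrix, and let Q be an invertible diagonal matrix with real diagonal entries such that Q − P_A is positive semidefinite. Then for every initial vector x₀ ∈ ℂ^V, the sequence defined inductively by x_{n+1} = (I − Q^{-2} A* A) x_n converges exponentially to a vector u satisfying A u = 0; precisely, there exist u ∈ ℂ^V with A u = 0 and r ∈ [0, 1) such that ‖Q(x_n − u)‖₂ ≤ ‖Q x₀‖₂ · rⁿ for all n ≥ 0. -/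
open Matrix BigOperators
open scoped ComplexOrder

/-- The closed ball `B(i, s)` of radius `s` around vertex `i` in the geodesic distance. -/
noncomputable def gball {V : Type*} [Fintype V] (G : SimpleGraph V) (i : V) (s : ℕ) :
    Finset V :=
  Finset.univ.filter fun j => G.dist i j ≤ s

/-- The diagonal entries of the preconditioning matrix `P_A` of a matrix `A` with
geodesic-width parameter `ω`:
`P_A(i,i) = max_{k ∈ B(i,ω)} max( Σ_{j ∈ B(k,ω)} |A(j,k)|, Σ_{j ∈ B(k,ω)} |A(k,j)| )`. -/
noncomputable def precond {V : Type*} [Fintype V] (G : SimpleGraph V)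
    (A : Matrix V V ℂ) (ω : ℕ) (i : V) : ℝ :=
  (gball G i ω).sup'
    ⟨i, by simp [gball, SimpleGraph.dist_self]⟩
    fun k => max (∑ j ∈ gball G k ω, ‖A j k‖)
      (∑ j ∈ gball G k ω, ‖A k j‖)

/-- The Euclidean (ℓ²) norm of a complex vector. -/
noncomputable def l2norm {V : Type*} [Fintype V] (y : V → ℂ) : ℝ :=
  Real.sqrt (∑ j, ‖y j‖ ^ 2)

/-! ### Auxiliary lemmas -/

/-- The sum of squared absolute values of a complex vector. -/
noncomputable def dsq {V : Type*} [Fintype V] (y : V → ℂ) : ℝ := ∑ j, ‖y j‖ ^ 2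

lemma l2norm_eq_sqrt_dsq {V : Type*} [Fintype V] (y : V → ℂ) :
    l2norm y = Real.sqrt (dsq y) := rfl

lemma dsq_nonneg' {V : Type*} [Fintype V] (y : V → ℂ) : 0 ≤ dsq y :=
  Finset.sum_nonneg fun _ _ => sq_nonneg _

lemma star_dot_self {V : Type*} [Fintype V] (y : V → ℂ) :
    star y ⬝ᵥ y = ((dsq y : ℝ) : ℂ) := by
  unfold dsq
  push_cast
  refine Finset.sum_congr rfl fun j _ => ?_
  show (starRingEnd ℂ) (y j) * y j = _
  rw [RCLike.conj_mul]
  norm_cast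

lemma dot_star_mulVec {V : Type*} [Fintype V] (M : Matrix V V ℂ) (z : V → ℂ) :
    star (M *ᵥ z) ⬝ᵥ (M *ᵥ z) = star z ⬝ᵥ ((Mᴴ * M) *ᵥ z) := by
  rw [star_mulVec, dotProduct_mulVec, vecMul_vecMul, ← dotProduct_mulVec]

lemma dsq_mulVec_unitary {V : Type*} [Fintype V] [DecidableEq V] {M : Matrix V V ℂ}
    (h : Mᴴ * M = 1) (z : V → ℂ) : dsq (M *ᵥ z) = dsq z := by
  have := dot_star_mulVec M z
  rw [h, one_mulVec, star_dot_self, star_dot_self] at this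
  exact_mod_cast this

lemma conj_sandwich_mul {V : Type*} [Fintype V] [DecidableEq V] (U X Y : Matrix V V ℂ)
    (hUU : star U * U = 1) :
    (U * X * star U) * (U * Y * star U) = U * (X * Y) * star U := by
  rw [Matrix.mul_assoc (U * X) (star U) (U * Y * star U),
    ← Matrix.mul_assoc (star U) (U * Y) (star U), ← Matrix.mul_assoc (star U) U Y, hUU, one_mul,
    ← Matrix.mul_assoc (U * X) Y (star U), Matrix.mul_assoc U X Y]

lemma self_mem_gball {V : Type*} [Fintype V] (G : SimpleGraph V) (i : V) (s : ℕ) :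
    i ∈ gball G i s := by simp [gball, SimpleGraph.dist_self]

lemma core_ineq {V : Type*} [Fintype V] [DecidableEq V] (G : SimpleGraph V)
    (A : Matrix V V ℂ) (ω : ℕ) (hω : ∀ i j, ω < G.dist i j → A i j = 0) (z : V → ℂ) :
    dsq (A *ᵥ z) ≤ ∑ j, (precond G A ω j) ^ 2 * ‖z j‖ ^ 2 := by
  set a : V → V → ℝ := fun k j => ‖A k j‖ with ha
  have ha_nonneg : ∀ k j, 0 ≤ a k j := fun k j => norm_nonneg _
  have hmem : ∀ k j, A k j ≠ 0 → k ∈ gball G j ω := by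
    intro k j h
    simp only [gball, Finset.mem_filter, Finset.mem_univ, true_and]
    rw [SimpleGraph.dist_comm]
    by_contra hd
    exact h (hω k j (lt_of_not_ge hd))
  have hR : ∀ j k, k ∈ gball G j ω → (∑ l, a k l) ≤ precond G A ω j := by
    intro j k hk
    have : (∑ l, a k l) = ∑ l ∈ gball G k ω, a k l := by
      refine (Finset.sum_subset (Finset.subset_univ _) ?_).symm
      intro l _ hl
      have : A k l = 0 := by
        apply hω
        simp only [gball, Finset.mem_filter, Finset.mem_univ, true_and, not_le] at hl
        exact hl
      simp [ha, this]
    rw [this]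
    exact le_trans (le_max_right _ _) (Finset.le_sup'
      (fun k => max (∑ j ∈ gball G k ω, ‖A j k‖)
        (∑ j ∈ gball G k ω, ‖A k j‖)) hk)
  have hC : ∀ j k, k ∈ gball G j ω → (∑ l, a l k) ≤ precond G A ω j := by
    intro j k hk
    have : (∑ l, a l k) = ∑ l ∈ gball G k ω, a l k := by
      refine (Finset.sum_subset (Finset.subset_univ _) ?_).symm
      intro l _ hl
      have : A l k = 0 := by
        apply hω
        simp only [gball, Finset.mem_filter, Finset.mem_univ, true_and, not_le] at hl
        rw [SimpleGraph.dist_comm]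
        exact hl
      simp [ha, this]
    rw [this]
    exact le_trans (le_max_left _ _) (Finset.le_sup'
      (fun k => max (∑ j ∈ gball G k ω, ‖A j k‖)
        (∑ j ∈ gball G k ω, ‖A k j‖)) hk)
  have hp_nonneg : ∀ j, 0 ≤ precond G A ω j := fun j =>
    le_trans (Finset.sum_nonneg fun l _ => ha_nonneg l j) (hC j j (self_mem_gball G j ω))
  have step1 : ∀ k, ‖(A *ᵥ z) k‖ ^ 2 ≤
      (∑ l, a k l) * (∑ j, a k j * ‖z j‖ ^ 2) := by
    intro k
    have h1 : ‖(A *ᵥ z) k‖ ≤ ∑ j, a k j * ‖z j‖ := by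
      refine le_trans (norm_sum_le _ _) ?_
      refine le_of_eq (Finset.sum_congr rfl fun j _ => ?_)
      simp only [norm_mul, ha]
    have h2 : ‖(A *ᵥ z) k‖ ^ 2 ≤ (∑ j, a k j * ‖z j‖) ^ 2 := by
      apply pow_le_pow_left₀ (norm_nonneg _) h1
    refine le_trans h2 ?_
    have := Finset.sum_mul_sq_le_sq_mul_sq Finset.univ (fun j => Real.sqrt (a k j))
      (fun j => Real.sqrt (a k j) * ‖z j‖)
    calc (∑ j, a k j * ‖z j‖) ^ 2
        = (∑ j, Real.sqrt (a k j) * (Real.sqrt (a k j) * ‖z j‖)) ^ 2 := by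
          congr 1
          refine Finset.sum_congr rfl fun j _ => ?_
          rw [← mul_assoc, Real.mul_self_sqrt (ha_nonneg k j)]
      _ ≤ (∑ j, Real.sqrt (a k j) ^ 2) * ∑ j, (Real.sqrt (a k j) * ‖z j‖) ^ 2 := this
      _ = (∑ l, a k l) * (∑ j, a k j * ‖z j‖ ^ 2) := by
          congr 1
          · exact Finset.sum_congr rfl fun j _ => Real.sq_sqrt (ha_nonneg k j)
          · refine Finset.sum_congr rfl fun j _ => ?_
            rw [mul_pow, Real.sq_sqrt (ha_nonneg k j)]
  calc dsq (A *ᵥ z) ≤ ∑ k, (∑ l, a k l) * (∑ j, a k j * ‖z j‖ ^ 2) :=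
        Finset.sum_le_sum fun k _ => step1 k
    _ = ∑ j, (∑ k, (∑ l, a k l) * a k j) * ‖z j‖ ^ 2 := by
        simp_rw [Finset.mul_sum]
        rw [Finset.sum_comm]
        simp_rw [Finset.sum_mul, mul_assoc]
    _ ≤ ∑ j, (precond G A ω j * precond G A ω j) * ‖z j‖ ^ 2 := by
        refine Finset.sum_le_sum fun j _ => ?_
        refine mul_le_mul_of_nonneg_right ?_ (sq_nonneg _)
        calc (∑ k, (∑ l, a k l) * a k j) ≤ ∑ k, precond G A ω j * a k j := by
              refine Finset.sum_le_sum fun k _ => ?_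
              by_cases h : A k j = 0
              · simp [ha, h]
              · exact mul_le_mul_of_nonneg_right (hR j k (hmem k j h)) (ha_nonneg k j)
          _ = precond G A ω j * ∑ k, a k j := by rw [Finset.mul_sum]
          _ ≤ precond G A ω j * precond G A ω j :=
              mul_le_mul_of_nonneg_left (hC j j (self_mem_gball G j ω)) (hp_nonneg j)
    _ = ∑ j, (precond G A ω j) ^ 2 * ‖z j‖ ^ 2 := by
        refine Finset.sum_congr rfl fun j _ => ?_
        ring

lemma precond_nonneg' {V : Type*} [Fintype V] (G : SimpleGraph V)
    (A : Matrix V V ℂ) (ω : ℕ) (i : V) : 0 ≤ precond G A ω i := by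
  refine le_trans ?_ (Finset.le_sup'
    (fun k => max (∑ j ∈ gball G k ω, ‖A j k‖)
      (∑ j ∈ gball G k ω, ‖A k j‖)) (self_mem_gball G i ω))
  exact le_trans (Finset.sum_nonneg fun j _ => norm_nonneg _) (le_max_left _ _)

/-- Let `G` be a connected finite graph, `A` a complex matrix indexed by the
vertices with geodesic-width at most `ω`, `P_A` its diagonal preconditioning matrix, and `Q`
an invertible diagonal matrix with real diagonal entries such that `Q - P_A` is positive
semidefinite.  Then for any initial vector `x₀`, the sequence `x_{n+1} = (I - Q⁻² Aᴴ A) x_n`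
converges exponentially to a vector `u` with `A u = 0`: there are `u` with `A u = 0` and
`r ∈ [0,1)` with `‖Q (x_n - u)‖₂ ≤ ‖Q x₀‖₂ rⁿ` for all `n`. -/
theorem stmt_0 {V : Type*} [Fintype V] [DecidableEq V]
    (G : SimpleGraph V) (hG : G.Connected)
    (A : Matrix V V ℂ) (ω : ℕ) (hω : ∀ i j, ω < G.dist i j → A i j = 0)
    (q : V → ℝ) (Q : Matrix V V ℂ)
    (hQdiag : Q = Matrix.diagonal fun i => (q i : ℂ))
    (hQinv : IsUnit Q)
    (hPSD : (Q - Matrix.diagonal fun i => ((precond G A ω i : ℝ) : ℂ)).PosSemidef)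
    (x₀ : V → ℂ) (x : ℕ → V → ℂ) (hx0 : x 0 = x₀)
    (hxrec : ∀ n, x (n + 1) = (1 - Q⁻¹ ^ 2 * Aᴴ * A) *ᵥ x n) :
    ∃ (u : V → ℂ) (r : ℝ), A *ᵥ u = 0 ∧ 0 ≤ r ∧ r < 1 ∧
      ∀ n, l2norm (Q *ᵥ (x n - u)) ≤ l2norm (Q *ᵥ x₀) * r ^ n := by
  classical
  have hdetQ : IsUnit Q.det := (Matrix.isUnit_iff_isUnit_det Q).mp hQinv
  have hQQi : Q * Q⁻¹ = 1 := Matrix.mul_nonsing_inv Q hdetQ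
  have hQiQ : Q⁻¹ * Q = 1 := Matrix.nonsing_inv_mul Q hdetQ
  set p : V → ℝ := precond G A ω with hp
  -- q dominates p
  have hqp : ∀ i, p i ≤ q i := by
    have h : (Q - Matrix.diagonal fun i => ((p i : ℝ) : ℂ)) =
        Matrix.diagonal (fun i => ((q i - p i : ℝ) : ℂ)) := by
      rw [hQdiag]
      ext i j
      rcases eq_or_ne i j with rfl | hij
      · push_cast [Matrix.sub_apply, Matrix.diagonal_apply_eq]
        ring
      · simp [Matrix.sub_apply, Matrix.diagonal_apply_ne _ hij]
    rw [h, Matrix.posSemidef_diagonal_iff] at hPSD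
    intro i
    have := hPSD i
    rw [Complex.zero_le_real] at this
    linarith
  have hqne : ∀ i, q i ≠ 0 := by
    intro i hqi
    rw [hQdiag, Matrix.det_diagonal] at hdetQ
    have : (∏ j, ((q j : ℝ) : ℂ)) = 0 :=
      Finset.prod_eq_zero (Finset.mem_univ i) (by simp [hqi])
    rw [this] at hdetQ
    exact not_isUnit_zero hdetQ
  have hq_pos : ∀ i, 0 < q i := fun i =>
    lt_of_le_of_ne (le_trans (precond_nonneg' G A ω i) (hqp i)) (Ne.symm (hqne i))
  have hQinvEq : Q⁻¹ = Matrix.diagonal (fun i => ((q i : ℂ))⁻¹) := by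
    apply Matrix.inv_eq_right_inv
    rw [hQdiag, Matrix.diagonal_mul_diagonal]
    rw [show (fun i => ((q i : ℂ)) * ((q i : ℂ))⁻¹) = fun _ => (1 : ℂ) from
      funext fun i => mul_inv_cancel₀ (by exact_mod_cast hqne i)]
    exact Matrix.diagonal_one
  have hQinvH : Q⁻¹ᴴ = Q⁻¹ := by
    rw [hQinvEq, Matrix.diagonal_conjTranspose]
    congr 1
    funext i
    show star ((q i : ℂ))⁻¹ = _
    rw [star_inv₀, Complex.star_def, Complex.conj_ofReal]
  set C := A * Q⁻¹ with hCdef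
  set B := Cᴴ * C with hBdef
  have hBps : B.PosSemidef := Matrix.posSemidef_conjTranspose_mul_self C
  set S := (1 : Matrix V V ℂ) - B with hSdef
  have hSH : S.IsHermitian := Matrix.isHermitian_one.sub hBps.1
  -- contraction property
  have hCcontr : ∀ y, dsq (C *ᵥ y) ≤ dsq y := by
    intro y
    have h1 : C *ᵥ y = A *ᵥ (Q⁻¹ *ᵥ y) := (mulVec_mulVec _ _ _).symm
    rw [h1]
    refine le_trans (core_ineq G A ω hω _) ?_
    have hz : ∀ j, (Q⁻¹ *ᵥ y) j = ((q j : ℂ))⁻¹ * y j := by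
      intro j
      rw [hQinvEq, mulVec_diagonal]
    calc ∑ j, p j ^ 2 * ‖(Q⁻¹ *ᵥ y) j‖ ^ 2
        ≤ ∑ j, q j ^ 2 * ‖(Q⁻¹ *ᵥ y) j‖ ^ 2 := by
          refine Finset.sum_le_sum fun j _ => ?_
          exact mul_le_mul_of_nonneg_right
            (pow_le_pow_left₀ (precond_nonneg' G A ω j) (hqp j) 2) (sq_nonneg _)
      _ = dsq y := by
          unfold dsq
          refine Finset.sum_congr rfl fun j _ => ?_
          rw [hz j, norm_mul, norm_inv, Complex.norm_real, Real.norm_eq_abs,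
            abs_of_pos (hq_pos j)]
          field_simp
          rw [mul_div_cancel_left₀ _ (hqne j)]
  have hSps : S.PosSemidef := by
    refine .of_dotProduct_mulVec_nonneg hSH fun y => ?_
    have hline : star y ⬝ᵥ (S *ᵥ y) = ((dsq y - dsq (C *ᵥ y) : ℝ) : ℂ) := by
      rw [hSdef, Matrix.sub_mulVec, one_mulVec, dotProduct_sub, hBdef,
        ← dot_star_mulVec, star_dot_self, star_dot_self]
      push_cast
      ring
    rw [hline, Complex.zero_le_real]
    linarith [hCcontr y]
  set μ : V → ℝ := hSH.eigenvalues with hμdef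
  set U : Matrix V V ℂ := (hSH.eigenvectorUnitary : Matrix V V ℂ) with hUdef
  have hUU : star U * U = 1 := Matrix.mem_unitaryGroup_iff'.mp hSH.eigenvectorUnitary.2
  have hUU' : U * star U = 1 := Matrix.mem_unitaryGroup_iff.mp hSH.eigenvectorUnitary.2
  have hspec : S = U * Matrix.diagonal (fun i => ((μ i : ℝ) : ℂ)) * star U :=
    hSH.spectral_theorem
  have hμ0 : ∀ i, 0 ≤ μ i := hSps.eigenvalues_nonneg
  have hμ1 : ∀ i, μ i ≤ 1 := by
    intro i
    set v : V → ℂ := ⇑(hSH.eigenvectorBasis i) with hv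
    have hvec : S *ᵥ v = μ i • v := hSH.mulVec_eigenvectorBasis i
    have hvd : dsq v = 1 := by
      have hnorm : ‖hSH.eigenvectorBasis i‖ = 1 := hSH.eigenvectorBasis.orthonormal.1 i
      have h2 : ‖hSH.eigenvectorBasis i‖ = Real.sqrt (dsq v) := by
        rw [EuclideanSpace.norm_eq]
        unfold dsq
        congr 1
      rw [h2] at hnorm
      have := congrArg (fun t => t ^ 2) hnorm
      simpa [Real.sq_sqrt (dsq_nonneg' v)] using this
    have hBv : B *ᵥ v = ((1 - μ i : ℝ) : ℂ) • v := by
      have hBS : B = 1 - S := by rw [hSdef, sub_sub_cancel]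
      rw [hBS, Matrix.sub_mulVec, one_mulVec, hvec]
      funext j
      simp only [Pi.sub_apply, Pi.smul_apply, smul_eq_mul, Complex.real_smul]
      push_cast
      ring
    have h0 : 0 ≤ star v ⬝ᵥ (B *ᵥ v) := hBps.dotProduct_mulVec_nonneg v
    rw [hBv, dotProduct_smul, star_dot_self, hvd, smul_eq_mul] at h0
    rw [show ((1 - μ i : ℝ) : ℂ) * ((1 : ℝ) : ℂ) = ((1 - μ i : ℝ) : ℂ) by push_cast; ring] at h0
    rw [Complex.zero_le_real] at h0
    linarith
  -- powers of S
  have hSpow : ∀ n : ℕ, S ^ n = U * Matrix.diagonal (fun i => ((μ i : ℂ)) ^ n) * star U := by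
    intro n
    induction n with
    | zero =>
      simp only [pow_zero]
      rw [show (Matrix.diagonal fun _ : V => (1 : ℂ)) = (1 : Matrix V V ℂ) from
        Matrix.diagonal_one, mul_one, hUU']
    | succ n ih =>
      rw [pow_succ, ih, hspec, conj_sandwich_mul U _ _ hUU, Matrix.diagonal_mul_diagonal]
      congr 2
  -- iteration in y-coordinates
  have hQM : Q * (1 - Q⁻¹ ^ 2 * Aᴴ * A) = S * Q := by
    have hCH : Cᴴ = Q⁻¹ * Aᴴ := by rw [hCdef, Matrix.conjTranspose_mul, hQinvH]
    rw [hSdef, hBdef, hCH, hCdef, Matrix.mul_sub, Matrix.sub_mul, mul_one, one_mul]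
    congr 1
    simp only [pow_two, ← Matrix.mul_assoc]
    rw [hQQi, one_mul, Matrix.mul_assoc (Q⁻¹ * Aᴴ * A) Q⁻¹ Q, hQiQ, mul_one]
  have hy : ∀ n, Q *ᵥ x n = S ^ n *ᵥ (Q *ᵥ x₀) := by
    intro n
    induction n with
    | zero => rw [hx0, pow_zero, one_mulVec]
    | succ n ih =>
      rw [hxrec n, mulVec_mulVec, hQM, ← mulVec_mulVec, ih, mulVec_mulVec, ← pow_succ']
  -- projection onto ker(A Q⁻¹) in y-coordinates
  set e : V → ℝ := fun i => if μ i = 1 then 1 else 0 with he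
  set E := Matrix.diagonal (fun i => ((e i : ℝ) : ℂ)) with hE
  set Pm := U * E * star U with hPmdef
  set u := Q⁻¹ *ᵥ (Pm *ᵥ (Q *ᵥ x₀)) with hudef
  have hQu : Q *ᵥ u = Pm *ᵥ (Q *ᵥ x₀) := by
    rw [hudef, mulVec_mulVec, hQQi, one_mulVec]
  have hBPm : B * Pm = 0 := by
    have hBfact : B = U * Matrix.diagonal (fun i => ((1 - μ i : ℝ) : ℂ)) * star U := by
      have hBS : B = 1 - S := by rw [hSdef, sub_sub_cancel]
      rw [hBS, hspec]
      calc (1 : Matrix V V ℂ) - U * Matrix.diagonal (fun i => ((μ i : ℝ) : ℂ)) * star U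
          = U * star U - U * Matrix.diagonal (fun i => ((μ i : ℝ) : ℂ)) * star U := by
            rw [hUU']
        _ = U * (1 - Matrix.diagonal (fun i => ((μ i : ℝ) : ℂ))) * star U := by
            rw [Matrix.mul_sub, mul_one, Matrix.sub_mul]
        _ = U * Matrix.diagonal (fun i => ((1 - μ i : ℝ) : ℂ)) * star U := by
            rw [← Matrix.diagonal_one, Matrix.diagonal_sub]
            push_cast
            rfl
    rw [hBfact, hPmdef, conj_sandwich_mul U _ _ hUU, Matrix.diagonal_mul_diagonal]
    rw [show (fun i => ((1 - μ i : ℝ) : ℂ) * ((e i : ℝ) : ℂ)) = fun _ => (0 : ℂ) from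
      funext fun i => by
        by_cases h : μ i = 1 <;> simp [he, h]]
    simp
  have hAu : A *ᵥ u = 0 := by
    set w := Pm *ᵥ (Q *ᵥ x₀) with hw
    have hBw : B *ᵥ w = 0 := by
      rw [hw, mulVec_mulVec, hBPm, Matrix.zero_mulVec]
    have hdz : dsq (C *ᵥ w) = 0 := by
      have h := dot_star_mulVec C w
      rw [← hBdef, hBw, dotProduct_zero, star_dot_self] at h
      exact_mod_cast h
    have hCw : C *ᵥ w = 0 := by
      funext k
      have hk := (Finset.sum_eq_zero_iff_of_nonneg fun j _ => sq_nonneg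
        (‖(C *ᵥ w) j‖)).mp hdz k (Finset.mem_univ k)
      have := pow_eq_zero_iff (n := 2) (by norm_num) |>.mp hk
      simpa using this
    rw [hudef, mulVec_mulVec, ← hCdef]
    exact hCw
  -- the convergence rate
  set T := Finset.univ.filter (fun i => μ i ≠ 1) with hT
  set rn : NNReal := T.sup (fun i => Real.toNNReal (μ i)) with hrn
  set r : ℝ := (rn : ℝ) with hr
  have hr0 : 0 ≤ r := rn.coe_nonneg
  have hr1 : r < 1 := by
    rw [hr, show (1 : ℝ) = ((1 : NNReal) : ℝ) by norm_num, NNReal.coe_lt_coe]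
    refine Finset.sup_lt_iff (by norm_num) |>.mpr ?_
    intro i hi
    rw [hT, Finset.mem_filter] at hi
    have hμlt : μ i < 1 := lt_of_le_of_ne (hμ1 i) hi.2
    rw [show (1 : NNReal) = Real.toNNReal 1 by simp]
    exact (Real.toNNReal_lt_toNNReal_iff zero_lt_one).mpr hμlt
  have hμr : ∀ i, μ i ≠ 1 → μ i ≤ r := by
    intro i hi
    have hle : Real.toNNReal (μ i) ≤ rn :=
      Finset.le_sup (f := fun i => Real.toNNReal (μ i))
        (show i ∈ T by simp only [hT, Finset.mem_filter]
                       exact ⟨Finset.mem_univ i, hi⟩)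
    calc μ i = (Real.toNNReal (μ i) : ℝ) := (Real.coe_toNNReal _ (hμ0 i)).symm
      _ ≤ r := NNReal.coe_le_coe.mpr hle
  have hkey : ∀ (n : ℕ) i, |μ i ^ n - e i| ≤ r ^ n := by
    intro n i
    by_cases h : μ i = 1
    · have he1 : e i = 1 := by simp [he, h]
      rw [he1, h, one_pow, sub_self, abs_zero]
      exact pow_nonneg hr0 n
    · have he0 : e i = 0 := by simp [he, h]
      rw [he0, sub_zero, abs_of_nonneg (pow_nonneg (hμ0 i) n)]
      exact pow_le_pow_left₀ (hμ0 i) (hμr i h) n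
  refine ⟨u, r, hAu, hr0, hr1, fun n => ?_⟩
  set z₀ := star U *ᵥ (Q *ᵥ x₀) with hz₀
  have hdiff : Q *ᵥ (x n - u) =
      U *ᵥ ((Matrix.diagonal fun i => ((μ i ^ n - e i : ℝ) : ℂ)) *ᵥ z₀) := by
    rw [Matrix.mulVec_sub, hy n, hQu, hSpow n, hPmdef]
    rw [← Matrix.sub_mulVec]
    have hfact : U * Matrix.diagonal (fun i => ((μ i : ℂ)) ^ n) * star U - U * E * star U =
        U * (Matrix.diagonal fun i => ((μ i ^ n - e i : ℝ) : ℂ)) * star U := by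
      rw [← Matrix.sub_mul, ← Matrix.mul_sub, hE, Matrix.diagonal_sub]
      congr 2
      funext i
      push_cast
      ring
    rw [hfact, ← mulVec_mulVec, ← mulVec_mulVec, hz₀]
  rw [hdiff]
  have hUnorm : dsq (U *ᵥ ((Matrix.diagonal fun i => ((μ i ^ n - e i : ℝ) : ℂ)) *ᵥ z₀)) =
      dsq ((Matrix.diagonal fun i => ((μ i ^ n - e i : ℝ) : ℂ)) *ᵥ z₀) := by
    apply dsq_mulVec_unitary
    rw [← Matrix.star_eq_conjTranspose]
    exact hUU
  have hz₀norm : dsq z₀ = dsq (Q *ᵥ x₀) := by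
    rw [hz₀]
    apply dsq_mulVec_unitary
    rw [← Matrix.star_eq_conjTranspose, star_star]
    exact hUU'
  have hdiag : dsq ((Matrix.diagonal fun i => ((μ i ^ n - e i : ℝ) : ℂ)) *ᵥ z₀) ≤
      (r ^ n) ^ 2 * dsq z₀ := by
    unfold dsq
    rw [Finset.mul_sum]
    refine Finset.sum_le_sum fun i _ => ?_
    rw [mulVec_diagonal, norm_mul, mul_pow, Complex.norm_real, Real.norm_eq_abs]
    exact mul_le_mul_of_nonneg_right
      (pow_le_pow_left₀ (abs_nonneg _) (hkey n i) 2) (sq_nonneg _)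
  rw [l2norm_eq_sqrt_dsq, l2norm_eq_sqrt_dsq, hUnorm]
  calc Real.sqrt (dsq ((Matrix.diagonal fun i => ((μ i ^ n - e i : ℝ) : ℂ)) *ᵥ z₀))
      ≤ Real.sqrt ((r ^ n) ^ 2 * dsq z₀) := Real.sqrt_le_sqrt hdiag
    _ = r ^ n * Real.sqrt (dsq z₀) := by
        rw [Real.sqrt_mul (sq_nonneg _), Real.sqrt_sq (pow_nonneg hr0 n)]
    _ = Real.sqrt (dsq (Q *ᵥ x₀)) * r ^ n := by rw [hz₀norm]; ring
end

section
/- Let A be an N×N complex matrix and let Q be an invertible diagonal matrix with positive real diagonal entries such that Q² − A* A is positive semidefinite. Then for every x₀ ∈ ℂ^N, the sequence x_{n+1} = (I − Q^{-2} A* A) x_n converges to the vector u = Q^{-1} P (Q x₀), where P is the orthogonal projection of ℂ^N onto the subspace Q · ker(A) = { Q v : A v = 0 }; in particular A u = 0. -/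
open Matrix BigOperators
open scoped ComplexOrder InnerProductSpace

namespace Stmt4Aux

variable {N : ℕ}

lemma tEL_mul (M P : Matrix (Fin N) (Fin N) ℂ) (v : EuclideanSpace ℂ (Fin N)) :
    Matrix.toEuclideanLin (M * P) v = Matrix.toEuclideanLin M (Matrix.toEuclideanLin P v) := by
  simp [Matrix.toEuclideanLin_apply, Matrix.mulVec_mulVec]

lemma conj_mul_conj (U X Y : Matrix (Fin N) (Fin N) ℂ) (h : star U * U = 1) :
    (U * X * star U) * (U * Y * star U) = U * (X * Y) * star U := by
  have h1 : (U * X * star U) * (U * Y * star U) = U * X * ((star U * U) * (Y * star U)) := by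
    noncomm_ring
  rw [h1, h, one_mul]
  noncomm_ring

lemma ker_map_eq (A Q : Matrix (Fin N) (Fin N) ℂ) (h1 : Q * Q⁻¹ = 1) (h2 : Q⁻¹ * Q = 1) :
    (LinearMap.ker (Matrix.toEuclideanLin A)).map (Matrix.toEuclideanLin Q)
      = LinearMap.ker (Matrix.toEuclideanLin (A * Q⁻¹)) := by
  ext w
  simp only [Submodule.mem_map, LinearMap.mem_ker]
  constructor
  · rintro ⟨v, hv, rfl⟩
    rw [← tEL_mul, mul_assoc, h2, mul_one, hv]
  · intro hw
    refine ⟨Matrix.toEuclideanLin Q⁻¹ w, ?_, ?_⟩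
    · rw [← tEL_mul]; exact hw
    · rw [← tEL_mul, h1]
      simp [Matrix.toEuclideanLin_apply]

lemma eig_le_one (H : Matrix (Fin N) (Fin N) ℂ) (hH : H.IsHermitian)
    (h1H : ((1 : Matrix (Fin N) (Fin N) ℂ) - H).PosSemidef) (i : Fin N) :
    hH.eigenvalues i ≤ 1 := by
  have hv := hH.mulVec_eigenvectorBasis i
  set v : Fin N → ℂ := ⇑(hH.eigenvectorBasis i) with hvdef
  have hnorm : dotProduct (star v) v = 1 := by
    have h1 : ⟪hH.eigenvectorBasis i, hH.eigenvectorBasis i⟫_ℂ = 1 := by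
      have := hH.eigenvectorBasis.orthonormal.1 i
      rw [@inner_self_eq_norm_sq_to_K ℂ, this]; norm_num
    rw [EuclideanSpace.inner_eq_star_dotProduct] at h1
    rw [dotProduct_comm]; simpa using h1
  have h2 := h1H.dotProduct_mulVec_nonneg v
  rw [Matrix.sub_mulVec, Matrix.one_mulVec, hv] at h2
  have h3 : dotProduct (star v) (v - hH.eigenvalues i • v)
      = 1 - (hH.eigenvalues i : ℂ) := by
    rw [dotProduct_sub, dotProduct_smul, hnorm]
    simp [smul_eq_mul]
  rw [h3] at h2
  have h4 : (0 : ℂ) ≤ ((1 - hH.eigenvalues i : ℝ) : ℂ) := by push_cast; exact h2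
  rw [Complex.zero_le_real] at h4
  linarith

end Stmt4Aux

open Stmt4Aux

/-- Let `A` be an `N × N` complex matrix and `Q` an invertible diagonal
matrix with positive real diagonal entries such that `Q² - Aᴴ A` is positive semidefinite.
Then for every `x₀`, the sequence `x_{n+1} = (I - Q⁻² Aᴴ A) x_n` converges to
`u = Q⁻¹ P (Q x₀)`, where `P` is the orthogonal projection onto the subspace
`Q · ker(A)`; in particular `A u = 0`. -/
theorem stmt_4 {N : ℕ} (A : Matrix (Fin N) (Fin N) ℂ)
    (q : Fin N → ℝ) (hq : ∀ i, 0 < q i)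
    (Q : Matrix (Fin N) (Fin N) ℂ)
    (hQdiag : Q = Matrix.diagonal fun i => (q i : ℂ))
    (hPSD : (Q ^ 2 - Aᴴ * A).PosSemidef)
    (x₀ : EuclideanSpace ℂ (Fin N)) (x : ℕ → EuclideanSpace ℂ (Fin N))
    (hx0 : x 0 = x₀)
    (hxrec : ∀ n, x (n + 1) = Matrix.toEuclideanLin (1 - Q⁻¹ ^ 2 * Aᴴ * A) (x n)) :
    Filter.Tendsto x Filter.atTop
        (nhds (Matrix.toEuclideanLin Q⁻¹
          ((Submodule.orthogonalProjectionOnto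
              ((LinearMap.ker (Matrix.toEuclideanLin A)).map (Matrix.toEuclideanLin Q))
              (Matrix.toEuclideanLin Q x₀) : EuclideanSpace ℂ (Fin N))))) ∧
      Matrix.toEuclideanLin A
        (Matrix.toEuclideanLin Q⁻¹
          ((Submodule.orthogonalProjectionOnto
              ((LinearMap.ker (Matrix.toEuclideanLin A)).map (Matrix.toEuclideanLin Q))
              (Matrix.toEuclideanLin Q x₀) : EuclideanSpace ℂ (Fin N)))) = 0 := by
  -- basic facts about Q
  have hQH : Qᴴ = Q := by
    rw [hQdiag, Matrix.diagonal_conjTranspose]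
    exact congrArg Matrix.diagonal (funext fun i => Complex.conj_ofReal _)
  have hdet : IsUnit Q.det := by
    rw [hQdiag, Matrix.det_diagonal]
    exact (Finset.prod_ne_zero_iff.mpr fun i _ => by exact_mod_cast (hq i).ne').isUnit
  have hQQi : Q * Q⁻¹ = 1 := Matrix.mul_nonsing_inv _ hdet
  have hQiQ : Q⁻¹ * Q = 1 := Matrix.nonsing_inv_mul _ hdet
  have hQiH : Q⁻¹ᴴ = Q⁻¹ := by rw [Matrix.conjTranspose_nonsing_inv, hQH]
  set B := A * Q⁻¹ with hBdef
  have hBH : Bᴴ = Q⁻¹ * Aᴴ := by rw [hBdef, Matrix.conjTranspose_mul, hQiH]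
  set H := (1 : Matrix (Fin N) (Fin N) ℂ) - Bᴴ * B with hHdef
  -- H is PSD
  have hkey : Q⁻¹ᴴ * (Q ^ 2 - Aᴴ * A) * Q⁻¹ = H := by
    rw [hQiH, hHdef, hBH, hBdef]
    have e1 : Q⁻¹ * (Q ^ 2 - Aᴴ * A) * Q⁻¹
        = Q⁻¹ * Q ^ 2 * Q⁻¹ - Q⁻¹ * Aᴴ * (A * Q⁻¹) := by noncomm_ring
    have e2 : Q⁻¹ * Q ^ 2 * Q⁻¹ = 1 := by
      rw [pow_two, ← mul_assoc, hQiQ, one_mul, hQQi]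
    rw [e1, e2]
  have hHPSD : H.PosSemidef := hkey ▸ hPSD.conjTranspose_mul_mul_same Q⁻¹
  have hBBPSD : (Bᴴ * B).PosSemidef := Matrix.posSemidef_conjTranspose_mul_self B
  have hHerm : H.IsHermitian := hHPSD.1
  set U : Matrix (Fin N) (Fin N) ℂ := (hHerm.eigenvectorUnitary : Matrix (Fin N) (Fin N) ℂ)
    with hUdef
  set mu : Fin N → ℝ := hHerm.eigenvalues with hmudef
  have hmu0 : ∀ i, 0 ≤ mu i := fun i => hHPSD.eigenvalues_nonneg i
  have hmu1 : ∀ i, mu i ≤ 1 := by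
    intro i
    apply eig_le_one H hHerm
    have : (1 : Matrix (Fin N) (Fin N) ℂ) - H = Bᴴ * B := by rw [hHdef, sub_sub_cancel]
    rw [this]; exact hBBPSD
  have hUU : U * star U = 1 := Matrix.mem_unitaryGroup_iff.mp hHerm.eigenvectorUnitary.2
  have hU'U : star U * U = 1 := Matrix.mem_unitaryGroup_iff'.mp hHerm.eigenvectorUnitary.2
  have hspec : H = U * Matrix.diagonal (fun i => (mu i : ℂ)) * star U :=
    hHerm.spectral_theorem
  set chi : Fin N → ℂ := fun i => if mu i = 1 then 1 else 0 with hchidef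
  set P : Matrix (Fin N) (Fin N) ℂ := U * Matrix.diagonal chi * star U with hPdef
  have hpow : ∀ n, H ^ n = U * Matrix.diagonal (fun i => (mu i : ℂ) ^ n) * star U := by
    intro n
    induction n with
    | zero =>
      simp only [pow_zero]
      rw [show (Matrix.diagonal fun i => (1 : ℂ)) = 1 from Matrix.diagonal_one, mul_one, hUU]
    | succ n ih =>
      rw [pow_succ, ih, hspec, conj_mul_conj _ _ _ hU'U, Matrix.diagonal_mul_diagonal]
      congr 2
  -- algebraic facts about P
  have hDDchi : (Matrix.diagonal fun i => (mu i : ℂ)) * Matrix.diagonal chi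
      = Matrix.diagonal chi := by
    rw [Matrix.diagonal_mul_diagonal]
    refine congrArg Matrix.diagonal (funext fun i => ?_)
    by_cases h : mu i = 1
    · simp [hchidef, h]
    · simp [hchidef, h]
  have hHP : H * P = P := by
    rw [hspec, hPdef, conj_mul_conj _ _ _ hU'U, hDDchi]
  have hBBP : (Bᴴ * B) * P = 0 := by
    have h1 : (1 - Bᴴ * B) * P = P := hHP
    rw [sub_mul, one_mul] at h1
    exact sub_eq_self.mp h1
  have hBP : B * P = 0 := by
    rw [← Matrix.conjTranspose_mul_self_eq_zero (A := B * P)]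
    rw [Matrix.conjTranspose_mul]
    calc Pᴴ * Bᴴ * (B * P) = Pᴴ * ((Bᴴ * B) * P) := by noncomm_ring
    _ = 0 := by rw [hBBP, mul_zero]
  have hPH : P.IsHermitian := by
    rw [Matrix.IsHermitian, hPdef, Matrix.star_eq_conjTranspose,
      Matrix.conjTranspose_mul, Matrix.conjTranspose_mul,
      Matrix.conjTranspose_conjTranspose, Matrix.diagonal_conjTranspose]
    have : star chi = chi := funext fun i => by
      by_cases h : mu i = 1 <;> simp [hchidef, h]
    rw [this, mul_assoc]
  have hPw : ∀ w : Fin N → ℂ, H *ᵥ w = w → P *ᵥ w = w := by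
    intro w hw
    set c : Fin N → ℂ := star U *ᵥ w with hcdef
    have hc : (Matrix.diagonal fun i => (mu i : ℂ)) *ᵥ c = c := by
      have h2 : star U * H = (Matrix.diagonal fun i => (mu i : ℂ)) * star U := by
        rw [hspec]
        calc star U * ((U * Matrix.diagonal fun i => (mu i : ℂ)) * star U)
            = (star U * U) * ((Matrix.diagonal fun i => (mu i : ℂ)) * star U) := by noncomm_ring
          _ = (Matrix.diagonal fun i => (mu i : ℂ)) * star U := by rw [hU'U, one_mul]
      have h1 : (star U * H) *ᵥ w = c := by rw [← Matrix.mulVec_mulVec, hw]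
      rw [h2, ← Matrix.mulVec_mulVec] at h1
      exact h1
    have hchic : Matrix.diagonal chi *ᵥ c = c := by
      funext i
      have h1 : (mu i : ℂ) * c i = c i := by
        have := congrFun hc i
        rwa [Matrix.mulVec_diagonal] at this
      rw [Matrix.mulVec_diagonal]
      by_cases h : mu i = 1
      · simp [hchidef, h]
      · have hci : c i = 0 := by
          by_contra hne
          exact h (by exact_mod_cast mul_right_cancel₀ hne (h1.trans (one_mul _).symm))
        simp [hchidef, h, hci]
    rw [hPdef, ← Matrix.mulVec_mulVec, ← Matrix.mulVec_mulVec, ← hcdef, hchic, hcdef,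
      Matrix.mulVec_mulVec, hUU, Matrix.one_mulVec]
  -- convergence of the diagonal powers
  have hd : Filter.Tendsto (fun n : ℕ => fun i => (mu i : ℂ) ^ n) Filter.atTop (nhds chi) := by
    rw [tendsto_pi_nhds]
    intro i
    by_cases h : mu i = 1
    · have he : ∀ n : ℕ, (mu i : ℂ) ^ n = 1 := fun n => by rw [h]; norm_num
      have hchii : chi i = 1 := by simp [hchidef, h]
      rw [hchii]
      simp only [he]
      exact tendsto_const_nhds
    · have hlt : ‖(mu i : ℂ)‖ < 1 := by
        rw [Complex.norm_real, Real.norm_eq_abs, abs_of_nonneg (hmu0 i)]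
        exact lt_of_le_of_ne (hmu1 i) h
      have hchii : chi i = 0 := by simp [hchidef, h]
      rw [hchii]
      exact tendsto_pow_atTop_nhds_zero_of_norm_lt_one hlt
  have hHn : Filter.Tendsto (fun n : ℕ => Q⁻¹ * H ^ n * Q) Filter.atTop
      (nhds (Q⁻¹ * P * Q)) := by
    have c1 : Continuous fun v : Fin N → ℂ =>
        Q⁻¹ * (U * Matrix.diagonal v * star U) * Q :=
      ((continuous_const.matrix_mul
        ((continuous_const.matrix_mul continuous_id.matrix_diagonal).matrix_mul
          continuous_const)).matrix_mul continuous_const)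
    exact Filter.Tendsto.congr
      (fun n => by simp only [Function.comp_apply]; rw [hpow n]) ((c1.tendsto chi).comp hd)
  -- trajectory formula
  have hM : (1 : Matrix (Fin N) (Fin N) ℂ) - Q⁻¹ ^ 2 * Aᴴ * A = Q⁻¹ * H * Q := by
    rw [hHdef, hBH, hBdef]
    have e1 : Q⁻¹ * (1 - Q⁻¹ * Aᴴ * (A * Q⁻¹)) * Q
        = Q⁻¹ * Q - Q⁻¹ * (Q⁻¹ * Aᴴ) * A * (Q⁻¹ * Q) := by noncomm_ring
    rw [e1, hQiQ, mul_one]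
    noncomm_ring
  have hxn : ∀ n, x n = Matrix.toEuclideanLin (Q⁻¹ * H ^ n * Q) x₀ := by
    intro n
    induction n with
    | zero =>
      rw [hx0, pow_zero, mul_one, hQiQ]
      simp [Matrix.toEuclideanLin_apply]
    | succ n ih =>
      rw [hxrec n, ih, hM, ← tEL_mul]
      refine congrArg (fun M => Matrix.toEuclideanLin M x₀) ?_
      calc Q⁻¹ * H * Q * (Q⁻¹ * H ^ n * Q)
          = Q⁻¹ * H * (Q * Q⁻¹) * (H ^ n * Q) := by noncomm_ring
        _ = Q⁻¹ * H ^ (n + 1) * Q := by rw [hQQi, mul_one, pow_succ']; noncomm_ring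
  have hxlim : Filter.Tendsto x Filter.atTop
      (nhds (Matrix.toEuclideanLin (Q⁻¹ * P * Q) x₀)) := by
    have h1 : Continuous fun M : Matrix (Fin N) (Fin N) ℂ =>
        M *ᵥ (WithLp.equiv 2 (Fin N → ℂ) x₀) := continuous_id.matrix_mulVec continuous_const
    have hev : Continuous fun M : Matrix (Fin N) (Fin N) ℂ =>
        Matrix.toEuclideanLin M x₀ :=
      (PiLp.continuous_toLp (p := 2) (β := fun _ : Fin N => ℂ)).comp h1
    exact Filter.Tendsto.congr (fun n => (hxn n).symm) ((hev.tendsto _).comp hHn)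
  -- identification of the projection
  set S := (LinearMap.ker (Matrix.toEuclideanLin A)).map (Matrix.toEuclideanLin Q) with hSdef
  set y := Matrix.toEuclideanLin Q x₀ with hydef
  have hSker : S = LinearMap.ker (Matrix.toEuclideanLin B) := ker_map_eq A Q hQQi hQiQ
  have hPsym := Matrix.isHermitian_iff_isSymmetric.mp hPH
  have hproj : (Submodule.orthogonalProjectionOnto S y : EuclideanSpace ℂ (Fin N))
      = Matrix.toEuclideanLin P y := by
    refine Submodule.eq_starProjection_of_mem_of_inner_eq_zero ?_ ?_
    · rw [hSker, LinearMap.mem_ker, ← tEL_mul, hBP]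
      simp
    · intro w hw
      rw [hSker, LinearMap.mem_ker] at hw
      have hHw : Matrix.toEuclideanLin H w = w := by
        have hz : Matrix.toEuclideanLin (Bᴴ * B) w = 0 := by
          rw [tEL_mul, hw, map_zero]
        rw [hHdef, map_sub, LinearMap.sub_apply, hz, sub_zero]
        simp [Matrix.toEuclideanLin_apply]
      have hPwE : Matrix.toEuclideanLin P w = w := by
        have h1 : H *ᵥ (WithLp.equiv 2 (Fin N → ℂ) w) = WithLp.equiv 2 (Fin N → ℂ) w := by
          have := congrArg (WithLp.equiv 2 (Fin N → ℂ)) hHw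
          simpa [Matrix.toEuclideanLin_apply] using this
        have h2 := hPw _ h1
        have h3 := congrArg (WithLp.equiv 2 (Fin N → ℂ)).symm h2
        simpa [Matrix.toEuclideanLin_apply] using h3
      rw [inner_sub_left, hPsym y w, hPwE, sub_self]
  have hvec : Matrix.toEuclideanLin Q⁻¹
      ((Submodule.orthogonalProjectionOnto S y : EuclideanSpace ℂ (Fin N)))
      = Matrix.toEuclideanLin (Q⁻¹ * P * Q) x₀ := by
    rw [hproj, hydef, ← tEL_mul, ← tEL_mul]
  constructor
  · rw [hvec]
    exact hxlim
  · rw [hvec, ← tEL_mul]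
    have hz : A * (Q⁻¹ * P * Q) = 0 := by
      have : A * (Q⁻¹ * P * Q) = (B * P) * Q := by rw [hBdef]; noncomm_ring
      rw [this, hBP, zero_mul]
    rw [hz, map_zero]
    rfl
end

section
/- Let A be an N×N complex matrix with nontrivial kernel and let Q be an invertible diagonal matrix with positive real diagonal entries such that Q² − A* A is positive semidefinite. For x₀ ∈ ℂ^N, the limit u of the sequence x_{n+1} = (I − Q^{-2} A* A) x_n is the zero vector if and only if Q x₀ is orthogonal to the subspace Q · ker(A) = { Q v : A v = 0 }; in particular, the set of initial vectors x₀ for which the limit is zero is a proper linear subspace of ℂ^N. -/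
open Matrix BigOperators Filter
open scoped ComplexOrder

private lemma pow_formula5 {N : ℕ} (M U : Matrix (Fin N) (Fin N) ℂ) (d : Fin N → ℂ)
    (hspec : M = U * Matrix.diagonal d * star U)
    (hUU' : star U * U = 1) (hUU : U * star U = 1) (n : ℕ) :
    M ^ n = U * Matrix.diagonal (fun i => (d i) ^ n) * star U := by
  induction n with
  | zero => simp [hUU]
  | succ n ih =>
      rw [pow_succ, ih, hspec]
      calc U * Matrix.diagonal (fun i => (d i) ^ n) * star U *
            (U * Matrix.diagonal d * star U)
          = U * (Matrix.diagonal (fun i => (d i) ^ n) * Matrix.diagonal d) * star U := by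
            simp only [Matrix.mul_assoc]
            rw [← Matrix.mul_assoc (star U), hUU', Matrix.one_mul]
        _ = _ := by
            rw [Matrix.diagonal_mul_diagonal]
            have h3 : (fun i => (d i) ^ n * d i) = fun i => (d i) ^ (n + 1) := by
              funext i; rw [← pow_succ]
            rw [h3]

private lemma diag_tendsto5 {N : ℕ} (lam : Fin N → ℝ) (h0 : ∀ i, 0 ≤ lam i)
    (h1 : ∀ i, lam i ≤ 1) :
    Tendsto (fun n : ℕ => Matrix.diagonal (fun i => ((lam i : ℂ)) ^ n)) atTop
      (nhds (Matrix.diagonal fun i => if lam i = 1 then (1:ℂ) else 0)) := by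
  apply tendsto_pi_nhds.2
  intro i
  rw [tendsto_pi_nhds]
  intro j
  rcases eq_or_ne i j with rfl | hij
  · simp only [Matrix.diagonal_apply_eq]
    rcases eq_or_ne (lam i) 1 with h | h
    · simp [h]
    · simp only [if_neg h]
      have hlt : lam i < 1 := lt_of_le_of_ne (h1 i) h
      have h2 := (Complex.continuous_ofReal.tendsto 0).comp
        (tendsto_pow_atTop_nhds_zero_of_lt_one (h0 i) hlt)
      simp only [Complex.ofReal_zero] at h2
      exact h2.congr fun n => by simp [Function.comp, Complex.ofReal_pow]
  · simp [Matrix.diagonal_apply_ne _ hij]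

set_option maxHeartbeats 1000000 in
/-- Let `A` be an `N × N` complex matrix with nontrivial kernel and `Q` an
invertible diagonal matrix with positive real diagonal entries such that `Q² - Aᴴ A` is
positive semidefinite.  For `x₀ ∈ ℂ^N`, the limit `u` of the sequence
`x_{n+1} = (I - Q⁻² Aᴴ A) x_n` is the zero vector if and only if `Q x₀` is orthogonal to
the subspace `Q · ker(A)`; in particular, the set of initial vectors `x₀` for which the
limit is zero is a proper linear subspace of `ℂ^N`. -/
theorem stmt_5 {N : ℕ} (A : Matrix (Fin N) (Fin N) ℂ)
    (q : Fin N → ℝ) (hq : ∀ i, 0 < q i)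
    (Q : Matrix (Fin N) (Fin N) ℂ)
    (hQdiag : Q = Matrix.diagonal fun i => (q i : ℂ))
    (hker : LinearMap.ker (Matrix.toEuclideanLin A) ≠ ⊥)
    (hPSD : (Q ^ 2 - Aᴴ * A).PosSemidef) :
    (∀ (x₀ : EuclideanSpace ℂ (Fin N)) (x : ℕ → EuclideanSpace ℂ (Fin N))
        (u : EuclideanSpace ℂ (Fin N)),
        x 0 = x₀ →
        (∀ n, x (n + 1) = Matrix.toEuclideanLin (1 - Q⁻¹ ^ 2 * Aᴴ * A) (x n)) →
        Filter.Tendsto x Filter.atTop (nhds u) →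
        (u = 0 ↔ Matrix.toEuclideanLin Q x₀ ∈
            ((LinearMap.ker (Matrix.toEuclideanLin A)).map (Matrix.toEuclideanLin Q))ᗮ)) ∧
      ∃ S : Submodule ℂ (EuclideanSpace ℂ (Fin N)), S ≠ ⊤ ∧
        (S : Set (EuclideanSpace ℂ (Fin N))) =
          {x₀ | Filter.Tendsto
            (fun n => Matrix.toEuclideanLin ((1 - Q⁻¹ ^ 2 * Aᴴ * A) ^ n) x₀)
            Filter.atTop (nhds 0)} := by
  classical
  have hQH : Qᴴ = Q := by
    rw [hQdiag, Matrix.diagonal_conjTranspose]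
    have hst : (star fun i => ((q i : ℂ))) = fun i => ((q i : ℂ)) := by
      funext i
      rw [Pi.star_apply, Complex.star_def, Complex.conj_ofReal]
    rw [hst]
  have hdet : IsUnit Q.det := by
    rw [hQdiag, Matrix.det_diagonal, isUnit_iff_ne_zero]
    exact Finset.prod_ne_zero_iff.2 fun i _ => by exact_mod_cast (hq i).ne'
  have hQQi : Q * Q⁻¹ = 1 := Matrix.mul_nonsing_inv _ hdet
  have hQiQ : Q⁻¹ * Q = 1 := Matrix.nonsing_inv_mul _ hdet
  have hQiH : Q⁻¹ᴴ = Q⁻¹ := by rw [Matrix.conjTranspose_nonsing_inv, hQH]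
  set B : Matrix (Fin N) (Fin N) ℂ := 1 - Q⁻¹ ^ 2 * Aᴴ * A with hBdef
  set M : Matrix (Fin N) (Fin N) ℂ := 1 - (A * Q⁻¹)ᴴ * (A * Q⁻¹) with hMdef
  have hcQ : ∀ X : Matrix (Fin N) (Fin N) ℂ, Q * (Q⁻¹ * X) = X := fun X => by
    rw [← Matrix.mul_assoc, hQQi, Matrix.one_mul]
  have hcQ' : ∀ X : Matrix (Fin N) (Fin N) ℂ, Q⁻¹ * (Q * X) = X := fun X => by
    rw [← Matrix.mul_assoc, hQiQ, Matrix.one_mul]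
  have hMalt : M = 1 - Q⁻¹ * (Aᴴ * A) * Q⁻¹ := by
    rw [hMdef, Matrix.conjTranspose_mul, hQiH]
    simp only [Matrix.mul_assoc]
  have hBM : B = Q⁻¹ * M * Q := by
    rw [hBdef, hMalt, Matrix.mul_sub, Matrix.mul_one, Matrix.sub_mul, hQiQ]
    congr 1
    simp only [pow_two, Matrix.mul_assoc, hQiQ, Matrix.mul_one]
  have hMpsd : M.PosSemidef := by
    have h := hPSD.conjTranspose_mul_mul_same Q⁻¹
    have he : Q⁻¹ᴴ * (Q ^ 2 - Aᴴ * A) * Q⁻¹ = M := by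
      rw [hQiH, hMalt, Matrix.mul_sub, Matrix.sub_mul]
      congr 1
      rw [pow_two, ← Matrix.mul_assoc, hQiQ, Matrix.one_mul, hQQi]
    rwa [he] at h
  have h1Mpsd : (1 - M).PosSemidef := by
    have h : 1 - M = (A * Q⁻¹)ᴴ * (A * Q⁻¹) := by rw [hMdef, sub_sub_cancel]
    rw [h]
    exact Matrix.posSemidef_conjTranspose_mul_self _
  have hMH := hMpsd.1
  set lam := hMH.eigenvalues with hlamdef
  set U : Matrix (Fin N) (Fin N) ℂ := (hMH.eigenvectorUnitary : Matrix (Fin N) (Fin N) ℂ)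
    with hUdef
  have hUU : U * star U = 1 := Matrix.mem_unitaryGroup_iff.mp hMH.eigenvectorUnitary.2
  have hUU' : star U * U = 1 := Matrix.mem_unitaryGroup_iff'.mp hMH.eigenvectorUnitary.2
  have h0le : ∀ i, 0 ≤ lam i := fun i => hMpsd.eigenvalues_nonneg i
  have hle1 : ∀ i, lam i ≤ 1 := by
    intro i
    have h := h1Mpsd.re_dotProduct_nonneg ⇑(hMH.eigenvectorBasis i)
    simp only [sub_mulVec, one_mulVec, hMH.mulVec_eigenvectorBasis, dotProduct_sub,
      dotProduct_smul, ← EuclideanSpace.inner_eq_star_dotProduct, inner_self_eq_norm_sq_to_K,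
      RCLike.smul_re, hMH.eigenvectorBasis.orthonormal.1 i, map_sub] at h
    simp at h
    have hn : (star (hMH.eigenvectorBasis i).ofLp ⬝ᵥ (hMH.eigenvectorBasis i).ofLp).re = 1 := by
      rw [dotProduct_comm, ← EuclideanSpace.inner_eq_star_dotProduct, inner_self_eq_norm_sq_to_K,
        hMH.eigenvectorBasis.orthonormal.1 i]
      simp
    rw [hn, mul_one] at h
    exact h
  have hspec : M = U * Matrix.diagonal (fun i => ((lam i : ℂ))) * star U := by
    have := hMH.spectral_theorem
    rw [Unitary.conjStarAlgAut_apply] at this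
    exact this
  have hMn : ∀ n, M ^ n = U * Matrix.diagonal (fun i => ((lam i : ℂ)) ^ n) * star U :=
    pow_formula5 M U _ hspec hUU' hUU
  have hDtend := diag_tendsto5 lam h0le hle1
  set Dlim : Matrix (Fin N) (Fin N) ℂ := Matrix.diagonal fun i => if lam i = 1 then (1:ℂ) else 0
    with hDlimdef
  have hMtend : Tendsto (fun n => M ^ n) atTop (nhds (U * Dlim * star U)) := by
    have hcont : Continuous fun D : Matrix (Fin N) (Fin N) ℂ => U * D * star U :=
      (continuous_const.matrix_mul continuous_id).matrix_mul continuous_const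
    exact ((hcont.tendsto Dlim).comp hDtend).congr fun n => (hMn n).symm
  have hBn : ∀ n, B ^ n = Q⁻¹ * M ^ n * Q := by
    intro n
    induction n with
    | zero => simp [hQiQ]
    | succ n ih =>
        rw [pow_succ, pow_succ, ih, hBM]
        simp only [Matrix.mul_assoc, hcQ]
  set P : Matrix (Fin N) (Fin N) ℂ := Q⁻¹ * (U * Dlim * star U) * Q with hPdef
  have hBtend : Tendsto (fun n => B ^ n) atTop (nhds P) := by
    have hcont : Continuous fun D : Matrix (Fin N) (Fin N) ℂ => Q⁻¹ * D * Q :=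
      (continuous_const.matrix_mul continuous_id).matrix_mul continuous_const
    exact ((hcont.tendsto _).comp hMtend).congr fun n => (hBn n).symm
  -- toEuclideanLin helpers
  have hmulE : ∀ (M₁ M₂ : Matrix (Fin N) (Fin N) ℂ) (v : EuclideanSpace ℂ (Fin N)),
      Matrix.toEuclideanLin (M₁ * M₂) v
        = Matrix.toEuclideanLin M₁ (Matrix.toEuclideanLin M₂ v) := by
    intro M₁ M₂ v
    simp [Matrix.toEuclideanLin_apply, ← Matrix.mulVec_mulVec]
  have honeE : ∀ v : EuclideanSpace ℂ (Fin N),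
      Matrix.toEuclideanLin (1 : Matrix (Fin N) (Fin N) ℂ) v = v := by
    intro v
    simp [Matrix.toEuclideanLin_apply]
  have hQinj : ∀ v : EuclideanSpace ℂ (Fin N), Matrix.toEuclideanLin Q v = 0 → v = 0 := by
    intro v hv
    have h := congrArg (Matrix.toEuclideanLin Q⁻¹) hv
    rwa [← hmulE, hQiQ, honeE, map_zero] at h
  have hcontE : ∀ T : Matrix (Fin N) (Fin N) ℂ, Continuous (Matrix.toEuclideanLin T) :=
    fun T => (Matrix.toEuclideanLin T).continuous_of_finiteDimensional
  -- the invariant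
  have hinv : ∀ (v y : EuclideanSpace ℂ (Fin N)), Matrix.toEuclideanLin A v = 0 →
      (inner ℂ (Matrix.toEuclideanLin Q v)
          (Matrix.toEuclideanLin Q (Matrix.toEuclideanLin B y)) : ℂ)
        = inner ℂ (Matrix.toEuclideanLin Q v) (Matrix.toEuclideanLin Q y) := by
    intro v y hv
    have hQB : Q * B = Q - Q⁻¹ * (Aᴴ * A) := by
      rw [hBdef, Matrix.mul_sub, Matrix.mul_one]
      congr 1
      simp only [pow_two, Matrix.mul_assoc, hcQ]
    rw [← hmulE, hQB, map_sub, LinearMap.sub_apply, inner_sub_right]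
    have hz : (inner ℂ (Matrix.toEuclideanLin Q v)
        (Matrix.toEuclideanLin (Q⁻¹ * (Aᴴ * A)) y) : ℂ) = 0 := by
      rw [hmulE]
      have hsa : Matrix.toEuclideanLin Q⁻¹
          = LinearMap.adjoint (Matrix.toEuclideanLin Q⁻¹) := by
        conv_lhs => rw [← hQiH]
        rw [Matrix.toEuclideanLin_conjTranspose_eq_adjoint]
      rw [hsa, LinearMap.adjoint_inner_right, ← hmulE, hQiQ, honeE, hmulE,
        Matrix.toEuclideanLin_conjTranspose_eq_adjoint, LinearMap.adjoint_inner_right, hv,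
        inner_zero_left]
    rw [hz, sub_zero]
  -- main iff
  have main : ∀ (x₀ : EuclideanSpace ℂ (Fin N)) (x : ℕ → EuclideanSpace ℂ (Fin N))
      (u : EuclideanSpace ℂ (Fin N)),
      x 0 = x₀ → (∀ n, x (n + 1) = Matrix.toEuclideanLin B (x n)) →
      Tendsto x atTop (nhds u) →
      (u = 0 ↔ Matrix.toEuclideanLin Q x₀ ∈
          ((LinearMap.ker (Matrix.toEuclideanLin A)).map (Matrix.toEuclideanLin Q))ᗮ) := by
    intro x₀ x u h0 hrec hlim
    have hfix : Matrix.toEuclideanLin B u = u := by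
      have h1 : Tendsto (fun n => x (n + 1)) atTop (nhds u) :=
        hlim.comp (tendsto_add_atTop_nat 1)
      have h2 : Tendsto (fun n => Matrix.toEuclideanLin B (x n)) atTop
          (nhds (Matrix.toEuclideanLin B u)) := (((hcontE B).tendsto u).comp hlim)
      exact tendsto_nhds_unique (h2.congr fun n => (hrec n).symm) h1
    have hAAu : Matrix.toEuclideanLin (Q⁻¹ ^ 2 * Aᴴ * A) u = 0 := by
      rw [hBdef, map_sub, LinearMap.sub_apply, honeE] at hfix
      exact sub_eq_self.mp hfix
    have hAu : Matrix.toEuclideanLin A u = 0 := by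
      have h5 : Q ^ 2 * (Q⁻¹ ^ 2 * Aᴴ * A) = Aᴴ * A := by
        calc Q ^ 2 * (Q⁻¹ ^ 2 * Aᴴ * A)
            = Q * (Q * (Q⁻¹ * (Q⁻¹ * (Aᴴ * A)))) := by simp only [pow_two, Matrix.mul_assoc]
          _ = Aᴴ * A := by rw [hcQ, hcQ]
      have h4 : Matrix.toEuclideanLin (Aᴴ * A) u = 0 := by
        calc Matrix.toEuclideanLin (Aᴴ * A) u
            = Matrix.toEuclideanLin (Q ^ 2)
                (Matrix.toEuclideanLin (Q⁻¹ ^ 2 * Aᴴ * A) u) := by rw [← hmulE, h5]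
          _ = 0 := by rw [hAAu, map_zero]
      have h6 : (inner ℂ (Matrix.toEuclideanLin A u) (Matrix.toEuclideanLin A u) : ℂ) = 0 := by
        rw [← LinearMap.adjoint_inner_right, ← Matrix.toEuclideanLin_conjTranspose_eq_adjoint,
          ← hmulE, h4, inner_zero_right]
      exact inner_self_eq_zero.mp h6
    have hconst : ∀ v : EuclideanSpace ℂ (Fin N), Matrix.toEuclideanLin A v = 0 → ∀ n,
        (inner ℂ (Matrix.toEuclideanLin Q v) (Matrix.toEuclideanLin Q (x n)) : ℂ)
          = inner ℂ (Matrix.toEuclideanLin Q v) (Matrix.toEuclideanLin Q x₀) := by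
      intro v hv n
      induction n with
      | zero => rw [h0]
      | succ n ih => rw [hrec, hinv v _ hv, ih]
    have hlim2 : ∀ v : EuclideanSpace ℂ (Fin N), Matrix.toEuclideanLin A v = 0 →
        (inner ℂ (Matrix.toEuclideanLin Q v) (Matrix.toEuclideanLin Q u) : ℂ)
          = inner ℂ (Matrix.toEuclideanLin Q v) (Matrix.toEuclideanLin Q x₀) := by
      intro v hv
      have hc : Continuous fun y : EuclideanSpace ℂ (Fin N) =>
          (inner ℂ (Matrix.toEuclideanLin Q v) (Matrix.toEuclideanLin Q y) : ℂ) :=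
        continuous_const.inner (hcontE Q)
      have h7 := (hc.tendsto u).comp hlim
      have h8 : Tendsto (fun n =>
          (inner ℂ (Matrix.toEuclideanLin Q v) (Matrix.toEuclideanLin Q (x n)) : ℂ)) atTop
          (nhds (inner ℂ (Matrix.toEuclideanLin Q v) (Matrix.toEuclideanLin Q x₀))) :=
        tendsto_const_nhds.congr fun n => (hconst v hv n).symm
      exact tendsto_nhds_unique h7 h8
    constructor
    · rintro rfl
      intro w hw
      obtain ⟨v, hv, rfl⟩ := hw
      have hv' : Matrix.toEuclideanLin A v = 0 := hv
      have h := hlim2 v hv'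
      rw [map_zero, inner_zero_right] at h
      exact h.symm
    · intro hmem
      have hQuK : Matrix.toEuclideanLin Q u ∈
          (LinearMap.ker (Matrix.toEuclideanLin A)).map (Matrix.toEuclideanLin Q) :=
        Submodule.mem_map_of_mem (LinearMap.mem_ker.mpr hAu)
      have h9 : (inner ℂ (Matrix.toEuclideanLin Q u) (Matrix.toEuclideanLin Q x₀) : ℂ) = 0 :=
        (Submodule.mem_orthogonal _ _).mp hmem _ hQuK
      have h10 : (inner ℂ (Matrix.toEuclideanLin Q u) (Matrix.toEuclideanLin Q u) : ℂ) = 0 :=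
        (hlim2 u hAu).trans h9
      exact hQinj u (inner_self_eq_zero.mp h10)
  -- convergence for every initial vector
  have hconv : ∀ x₀ : EuclideanSpace ℂ (Fin N),
      ∃ u, Tendsto (fun n => Matrix.toEuclideanLin (B ^ n) x₀) atTop (nhds u) := by
    intro x₀
    let L : Matrix (Fin N) (Fin N) ℂ →ₗ[ℂ] EuclideanSpace ℂ (Fin N) :=
      { toFun := fun T => Matrix.toEuclideanLin T x₀
        map_add' := fun T₁ T₂ => by
          show Matrix.toEuclideanLin (T₁ + T₂) x₀ = _
          rw [map_add, LinearMap.add_apply]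
        map_smul' := fun c T => by
          show Matrix.toEuclideanLin (c • T) x₀ = _
          rw [_root_.map_smul, LinearMap.smul_apply, RingHom.id_apply] }
    refine ⟨L P, ?_⟩
    exact ((L.continuous_of_finiteDimensional.tendsto P).comp hBtend).congr fun n => rfl
  refine ⟨main, ?_⟩
  refine ⟨Submodule.comap (Matrix.toEuclideanLin Q)
    (((LinearMap.ker (Matrix.toEuclideanLin A)).map (Matrix.toEuclideanLin Q))ᗮ), ?_, ?_⟩
  · intro htop
    obtain ⟨v, hv, hvne⟩ := (Submodule.ne_bot_iff _).mp hker
    have hvS : v ∈ Submodule.comap (Matrix.toEuclideanLin Q)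
        (((LinearMap.ker (Matrix.toEuclideanLin A)).map (Matrix.toEuclideanLin Q))ᗮ) := by
      rw [htop]; trivial
    rw [Submodule.mem_comap] at hvS
    have h := (Submodule.mem_orthogonal _ _).mp hvS _ (Submodule.mem_map_of_mem hv)
    exact hvne (hQinj v (inner_self_eq_zero.mp h))
  · ext x₀
    simp only [SetLike.mem_coe, Set.mem_setOf_eq, Submodule.mem_comap]
    obtain ⟨u, hu⟩ := hconv x₀
    have hiff := main x₀ (fun n => Matrix.toEuclideanLin (B ^ n) x₀) u
      (by
        show Matrix.toEuclideanLin (B ^ 0) x₀ = x₀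
        rw [pow_zero, honeE])
      (fun n => by
        show Matrix.toEuclideanLin (B ^ (n + 1)) x₀
          = Matrix.toEuclideanLin B (Matrix.toEuclideanLin (B ^ n) x₀)
        rw [pow_succ', hmulE]) hu
    constructor
    · intro hx
      have h0 : u = 0 := hiff.mpr hx
      rwa [h0] at hu
    · intro htend
      exact hiff.mp (tendsto_nhds_unique hu htend)
end

section
/- Let A be an N×N complex matrix with nontrivial kernel and let Q be an invertible diagonal matrix with positive real diagonal entries such that Q² − A* A is positive semidefinite. Then the set of real vectors x₀ ∈ ℝ^N (viewed inside ℂ^N) for which the limit of the sequence x_{n+1} = (I − Q^{-2} A* A) x_n is the zero vector has Lebesgue measure zero in ℝ^N; consequently, if the entries of x₀ are i.i.d. uniformly distributed on [0,1], then almost surely the limit is a nonzero eigenvector of A associated with the eigenvalue zero. -/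
open Matrix BigOperators Filter
open scoped ComplexOrder

-- core matrix lemma
theorem core_lemma {N : ℕ} (A : Matrix (Fin N) (Fin N) ℂ)
    (q : Fin N → ℝ) (hq : ∀ i, 0 < q i)
    (Q : Matrix (Fin N) (Fin N) ℂ)
    (hQdiag : Q = Matrix.diagonal fun i => (q i : ℂ))
    (hPSD : (Q ^ 2 - Aᴴ * A).PosSemidef) :
    ∃ L : Matrix (Fin N) (Fin N) ℂ,
      (∀ x : Fin N → ℂ, Filter.Tendsto (fun n => ((1 - Q⁻¹ ^ 2 * Aᴴ * A) ^ n) *ᵥ x)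
        Filter.atTop (nhds (L *ᵥ x))) ∧ A * L = 0 := by
  classical
  set Qi : Matrix (Fin N) (Fin N) ℂ := Matrix.diagonal (fun i => ((q i : ℂ))⁻¹) with hQi
  have hqne : ∀ i, (q i : ℂ) ≠ 0 := fun i => by
    exact_mod_cast Complex.ofReal_ne_zero.mpr (hq i).ne'
  have hQQi : Q * Qi = 1 := by
    rw [hQdiag, hQi, Matrix.diagonal_mul_diagonal]
    rw [show (fun i => (q i : ℂ) * ((q i : ℂ))⁻¹) = fun _ => 1 from funext fun i => mul_inv_cancel₀ (hqne i)]
    exact Matrix.diagonal_one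
  have hQiQ : Qi * Q = 1 := by
    rw [hQdiag, hQi, Matrix.diagonal_mul_diagonal]
    rw [show (fun i => ((q i : ℂ))⁻¹ * (q i : ℂ)) = fun _ => 1 from funext fun i => inv_mul_cancel₀ (hqne i)]
    exact Matrix.diagonal_one
  have hQinv : Q⁻¹ = Qi := Matrix.inv_eq_right_inv hQQi
  have hQiH : Qiᴴ = Qi := by
    ext i j
    rcases eq_or_ne i j with h | h
    · subst h
      simp [hQi, Matrix.conjTranspose_apply, Matrix.diagonal_apply_eq,
        ← Complex.ofReal_inv, Complex.conj_ofReal]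
    · simp [hQi, Matrix.conjTranspose_apply, Matrix.diagonal_apply_ne _ h,
        Matrix.diagonal_apply_ne _ (Ne.symm h)]
  have hQH : Qᴴ = Q := by
    ext i j
    rcases eq_or_ne i j with h | h
    · subst h
      simp [hQdiag, Matrix.conjTranspose_apply, Matrix.diagonal_apply_eq, Complex.conj_ofReal]
    · simp [hQdiag, Matrix.conjTranspose_apply, Matrix.diagonal_apply_ne _ h,
        Matrix.diagonal_apply_ne _ (Ne.symm h)]
  set S : Matrix (Fin N) (Fin N) ℂ := Qi * (Aᴴ * A) * Qi with hS
  set C : Matrix (Fin N) (Fin N) ℂ := 1 - S with hCdef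
  have hQiQ2Qi : Qi * Q ^ 2 * Qi = 1 := by
    rw [pow_two, ← mul_assoc, mul_assoc (Qi * Q), hQQi, mul_one, hQiQ]
  have hkey : Qi * (Q ^ 2 - Aᴴ * A) * Qi = C := by
    rw [Matrix.mul_sub, Matrix.sub_mul, hQiQ2Qi]
  have hCpsd : C.PosSemidef := by
    have h := hPSD.conjTranspose_mul_mul_same Qi
    rwa [hQiH, hkey] at h
  have hSpsd : S.PosSemidef := by
    have h : S = (A * Qi)ᴴ * (A * Qi) := by
      rw [Matrix.conjTranspose_mul, hQiH, mul_assoc, ← mul_assoc Aᴴ, ← mul_assoc]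
    rw [h]; exact Matrix.posSemidef_conjTranspose_mul_self _
  have hC : C.IsHermitian := hCpsd.1
  set lam : Fin N → ℝ := hC.eigenvalues with hlam
  have hlam0 : ∀ i, 0 ≤ lam i := fun i => hCpsd.eigenvalues_nonneg i
  have hlam1 : ∀ i, lam i ≤ 1 := by
    intro i
    set v : Fin N → ℂ := ⇑(hC.eigenvectorBasis i) with hv
    have h1 : 0 ≤ Complex.re ((star v) ⬝ᵥ (S *ᵥ v)) :=
      hSpsd.re_dotProduct_nonneg _
    have h2 : lam i = Complex.re ((star v) ⬝ᵥ (C *ᵥ v)) :=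
      hC.eigenvalues_eq i
    have hnorm : (star v) ⬝ᵥ v = 1 := by
      have hn := hC.eigenvectorBasis.orthonormal.1 i
      have h3 : (inner ℂ (hC.eigenvectorBasis i) (hC.eigenvectorBasis i) : ℂ) = 1 := by
        rw [inner_self_eq_norm_sq_to_K, hn]; norm_num
      rw [EuclideanSpace.inner_eq_star_dotProduct, dotProduct_comm] at h3
      exact h3
    have hSC : S = 1 - C := by rw [hCdef, sub_sub_cancel]
    have h4 : S *ᵥ v = v - C *ᵥ v := by
      rw [hSC, Matrix.sub_mulVec, Matrix.one_mulVec]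
    rw [h4, dotProduct_sub, hnorm] at h1
    simp only [Complex.sub_re, Complex.one_re] at h1
    linarith [h2]
  set U : Matrix (Fin N) (Fin N) ℂ := (hC.eigenvectorUnitary : Matrix (Fin N) (Fin N) ℂ) with hUdef
  have hUU : star U * U = 1 := Unitary.coe_star_mul_self hC.eigenvectorUnitary
  have hUU' : U * star U = 1 := Unitary.coe_mul_star_self hC.eigenvectorUnitary
  set dlam : Fin N → ℂ := fun i => ((lam i : ℝ) : ℂ) with hdlam
  have hdiagC : star U * C * U = Matrix.diagonal dlam := by
    have h := hC.conjStarAlgAut_star_eigenvectorUnitary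
    rw [Unitary.conjStarAlgAut_star_apply] at h
    exact h
  have hCU : C = U * Matrix.diagonal dlam * star U := by
    have h := hC.spectral_theorem
    rw [Unitary.conjStarAlgAut_apply] at h
    exact h
  have hpow : ∀ n : ℕ, C ^ n = U * Matrix.diagonal (fun i => (dlam i) ^ n) * star U := by
    intro n
    induction n with
    | zero =>
      simp only [pow_zero, Matrix.diagonal_one, Matrix.mul_one, hUU']
    | succ n ih =>
      rw [pow_succ, ih, hCU]
      rw [Matrix.mul_assoc (U * Matrix.diagonal (fun i => dlam i ^ n)),
        ← Matrix.mul_assoc (star U), ← Matrix.mul_assoc (star U), hUU, Matrix.one_mul]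
      rw [Matrix.mul_assoc U, ← Matrix.mul_assoc (Matrix.diagonal (fun i => dlam i ^ n)),
        Matrix.diagonal_mul_diagonal]
      rw [show (fun i => dlam i ^ n * dlam i) = fun i => dlam i ^ (n + 1) from
        funext fun i => (pow_succ _ _).symm]
      simp only [Matrix.mul_assoc]
  set dInf : Fin N → ℂ := fun i => if lam i = 1 then 1 else 0 with hdInf
  set L : Matrix (Fin N) (Fin N) ℂ := Qi * (U * Matrix.diagonal dInf * star U) * Q with hL
  -- B = Qi * C * Q and powers
  have hBC : 1 - Q⁻¹ ^ 2 * Aᴴ * A = Qi * C * Q := by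
    rw [hQinv, hCdef, hS, Matrix.mul_sub, Matrix.sub_mul, Matrix.mul_one, hQiQ]
    congr 1
    simp only [pow_two, Matrix.mul_assoc, hQiQ, Matrix.mul_one]
  have hpowB : ∀ n : ℕ, (1 - Q⁻¹ ^ 2 * Aᴴ * A) ^ n = Qi * C ^ n * Q := by
    intro n
    induction n with
    | zero => simp only [pow_zero, Matrix.mul_one, hQiQ]
    | succ n ih =>
      rw [pow_succ, ih, hBC, pow_succ]
      rw [Matrix.mul_assoc (Qi * C ^ n), ← Matrix.mul_assoc Q, ← Matrix.mul_assoc Q, hQQi,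
        Matrix.one_mul]
      simp only [Matrix.mul_assoc]
  -- entrywise limits
  have hlimEntry : ∀ i, Filter.Tendsto (fun n : ℕ => (dlam i) ^ n) atTop (nhds (dInf i)) := by
    intro i
    by_cases h : lam i = 1
    · simp only [hdlam, hdInf, h, Complex.ofReal_one, one_pow, if_true]
      exact tendsto_const_nhds
    · have h1 : ‖dlam i‖ < 1 := by
        rw [hdlam]
        simp only [Complex.norm_real, Real.norm_eq_abs, abs_of_nonneg (hlam0 i)]
        exact lt_of_le_of_ne (hlam1 i) h
      simp only [hdInf, h, if_false]
      exact tendsto_pow_atTop_nhds_zero_of_norm_lt_one h1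
  have hDtend : Filter.Tendsto (fun n : ℕ => Matrix.diagonal (fun i => (dlam i) ^ n)) atTop
      (nhds (Matrix.diagonal dInf)) := by
    refine tendsto_pi_nhds.mpr ?_
    intro i
    rw [tendsto_pi_nhds]
    intro j
    by_cases h : i = j
    · subst h
      simpa only [Matrix.diagonal_apply_eq] using hlimEntry i
    · simpa only [Matrix.diagonal_apply_ne _ h] using
        (tendsto_const_nhds : Filter.Tendsto (fun _ : ℕ => (0:ℂ)) atTop (nhds 0))
  have hFcont : Continuous (fun M : Matrix (Fin N) (Fin N) ℂ => Qi * (U * M * star U) * Q) :=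
    ((continuous_const.matrix_mul
      ((continuous_const.matrix_mul continuous_id).matrix_mul continuous_const)).matrix_mul
        continuous_const)
  have hBtend : Filter.Tendsto (fun n : ℕ => (1 - Q⁻¹ ^ 2 * Aᴴ * A) ^ n) atTop (nhds L) := by
    have h := (hFcont.tendsto (Matrix.diagonal dInf)).comp hDtend
    have heq : (fun n : ℕ => (1 - Q⁻¹ ^ 2 * Aᴴ * A) ^ n)
        = fun n => Qi * (U * Matrix.diagonal (fun i => dlam i ^ n) * star U) * Q := by
      funext n
      rw [hpowB n, hpow n]
    rw [hL, heq]
    exact h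
  -- A * L = 0
  set R : Matrix (Fin N) (Fin N) ℂ := A * Qi * U with hR
  have hRR : Rᴴ * R = 1 - Matrix.diagonal dlam := by
    have h1 : Rᴴ * R = star U * S * U := by
      rw [hR, Matrix.conjTranspose_mul, Matrix.conjTranspose_mul, hQiH, hS]
      simp only [Matrix.mul_assoc, Matrix.star_eq_conjTranspose]
    have h2 : S = 1 - C := by rw [hCdef, sub_sub_cancel]
    rw [h1, h2, Matrix.mul_sub, Matrix.sub_mul, Matrix.mul_one, hUU, hdiagC]
  have hZ : R * Matrix.diagonal dInf = 0 := by
    rw [← Matrix.conjTranspose_mul_self_eq_zero]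
    rw [Matrix.conjTranspose_mul, ← Matrix.mul_assoc, Matrix.mul_assoc _ Rᴴ R, hRR,
      Matrix.diagonal_conjTranspose]
    have h1 : (1 : Matrix (Fin N) (Fin N) ℂ) - Matrix.diagonal dlam
        = Matrix.diagonal (fun i => 1 - dlam i) := by
      rw [← Matrix.diagonal_one, Matrix.diagonal_sub]
    rw [h1, Matrix.diagonal_mul_diagonal, Matrix.diagonal_mul_diagonal]
    ext i j
    rcases eq_or_ne i j with h | h
    · subst h
      by_cases hli : lam i = 1 <;>
        simp [Matrix.diagonal_apply_eq, Pi.star_apply, hdInf, hdlam, hli]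
    · simp [Matrix.diagonal_apply_ne _ h]
  have hAL : A * L = 0 := by
    have h1 : A * L = R * Matrix.diagonal dInf * (star U * Q) := by
      rw [hL, hR]
      simp only [Matrix.mul_assoc]
    rw [h1, hZ, Matrix.zero_mul]
  refine ⟨L, fun x => ?_, hAL⟩
  have hmv : Continuous (fun M : Matrix (Fin N) (Fin N) ℂ => M *ᵥ x) :=
    continuous_id.matrix_mulVec continuous_const
  exact (hmv.tendsto L).comp hBtend



/-- Let `A` be an `N × N` complex matrix with nontrivial kernel and `Q` an
invertible diagonal matrix with positive real diagonal entries such that `Q² - Aᴴ A` is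
positive semidefinite.  Then the set of real vectors `x₀ ∈ ℝ^N` (viewed inside `ℂ^N`) for
which the limit of the sequence `x_{n+1} = (I - Q⁻² Aᴴ A) x_n` is the zero vector has
Lebesgue measure zero in `ℝ^N`; consequently, if the entries of `x₀` are i.i.d. uniformly
distributed on `[0,1]`, then almost surely the limit is a nonzero eigenvector of `A`
associated with the eigenvalue zero. -/
theorem stmt_6 {N : ℕ} (A : Matrix (Fin N) (Fin N) ℂ)
    (q : Fin N → ℝ) (hq : ∀ i, 0 < q i)
    (Q : Matrix (Fin N) (Fin N) ℂ)
    (hQdiag : Q = Matrix.diagonal fun i => (q i : ℂ))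
    (hker : ∃ v : Fin N → ℂ, v ≠ 0 ∧ A *ᵥ v = 0)
    (hPSD : (Q ^ 2 - Aᴴ * A).PosSemidef) :
    MeasureTheory.volume {y : Fin N → ℝ |
        Filter.Tendsto (fun n => ((1 - Q⁻¹ ^ 2 * Aᴴ * A) ^ n) *ᵥ fun i => (y i : ℂ))
          Filter.atTop (nhds 0)} = 0 ∧
      (MeasureTheory.Measure.pi fun _ : Fin N =>
          MeasureTheory.volume.restrict (Set.Icc (0 : ℝ) 1))
        {y : Fin N → ℝ | ∃ u : Fin N → ℂ,
          Filter.Tendsto (fun n => ((1 - Q⁻¹ ^ 2 * Aᴴ * A) ^ n) *ᵥ fun i => (y i : ℂ))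
            Filter.atTop (nhds u) ∧ u ≠ 0 ∧ A *ᵥ u = 0} = 1 := by
  classical
  obtain ⟨L, hBlim, hAL⟩ := core_lemma A q hq Q hQdiag hPSD
  -- L fixes the kernel of A
  have hfix : ∀ v : Fin N → ℂ, A *ᵥ v = 0 → L *ᵥ v = v := by
    intro v hv
    have hBv : (1 - Q⁻¹ ^ 2 * Aᴴ * A) *ᵥ v = v := by
      rw [Matrix.sub_mulVec, Matrix.one_mulVec, ← Matrix.mulVec_mulVec, hv,
        Matrix.mulVec_zero, sub_zero]
    have hpow : ∀ n : ℕ, ((1 - Q⁻¹ ^ 2 * Aᴴ * A) ^ n) *ᵥ v = v := by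
      intro n
      induction n with
      | zero => simp
      | succ n ih => rw [pow_succ, ← Matrix.mulVec_mulVec, hBv, ih]
    have h1 : Filter.Tendsto (fun n : ℕ => ((1 - Q⁻¹ ^ 2 * Aᴴ * A) ^ n) *ᵥ v) atTop (nhds v) := by
      rw [show (fun n : ℕ => ((1 - Q⁻¹ ^ 2 * Aᴴ * A) ^ n) *ᵥ v) = fun _ => v from funext hpow]
      exact tendsto_const_nhds
    exact tendsto_nhds_unique (hBlim v) h1
  -- the real-linear limit map
  set f : (Fin N → ℝ) →ₗ[ℝ] (Fin N → ℂ) :=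
    { toFun := fun y => L *ᵥ fun i => (y i : ℂ)
      map_add' := by
        intro a b
        show (L *ᵥ fun i => (((a + b) i : ℝ) : ℂ))
            = (L *ᵥ fun i => ((a i : ℝ) : ℂ)) + (L *ᵥ fun i => ((b i : ℝ) : ℂ))
        have h : (fun i => (((a + b) i : ℝ) : ℂ))
            = (fun i => ((a i : ℝ) : ℂ)) + fun i => ((b i : ℝ) : ℂ) := by
          funext i
          simp
        rw [h, Matrix.mulVec_add]
      map_smul' := by
        intro r a
        show (L *ᵥ fun i => (((r • a) i : ℝ) : ℂ)) = r • (L *ᵥ fun i => ((a i : ℝ) : ℂ))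
        have h : (fun i => (((r • a) i : ℝ) : ℂ)) = (r : ℂ) • fun i => ((a i : ℝ) : ℂ) := by
          funext i
          simp [Complex.ofReal_mul]
        rw [h, Matrix.mulVec_smul]
        funext i
        simp [Complex.real_smul] } with hf
  have hfapp : ∀ y : Fin N → ℝ, f y = L *ᵥ fun i => ((y i : ℝ) : ℂ) := fun y => rfl
  have hAu : ∀ x : Fin N → ℂ, A *ᵥ (L *ᵥ x) = 0 := by
    intro x
    rw [Matrix.mulVec_mulVec, hAL, Matrix.zero_mulVec]
  have hT : {y : Fin N → ℝ |
      Filter.Tendsto (fun n => ((1 - Q⁻¹ ^ 2 * Aᴴ * A) ^ n) *ᵥ fun i => (y i : ℂ))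
        Filter.atTop (nhds 0)} = ↑(LinearMap.ker f) := by
    ext y
    simp only [Set.mem_setOf_eq, SetLike.mem_coe, LinearMap.mem_ker]
    rw [hfapp y]
    constructor
    · intro h
      exact tendsto_nhds_unique (hBlim _) h
    · intro h
      have h2 := hBlim fun i => ((y i : ℝ) : ℂ)
      rwa [h] at h2
  obtain ⟨v, hv0, hAv⟩ := hker
  have hKner : LinearMap.ker f ≠ ⊤ := by
    intro htop
    have hf0 : f = 0 := LinearMap.ker_eq_top.mp htop
    have ha : L *ᵥ (fun i => (((v i).re : ℝ) : ℂ)) = 0 := by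
      have := congrFun (congrArg (fun g : (Fin N → ℝ) →ₗ[ℝ] (Fin N → ℂ) => g.toFun)
        hf0) (fun i => (v i).re)
      simpa [hf] using this
    have hb : L *ᵥ (fun i => (((v i).im : ℝ) : ℂ)) = 0 := by
      have := congrFun (congrArg (fun g : (Fin N → ℝ) →ₗ[ℝ] (Fin N → ℂ) => g.toFun)
        hf0) (fun i => (v i).im)
      simpa [hf] using this
    have hva : (fun i => (((v i).re : ℝ) : ℂ)) + Complex.I • (fun i => (((v i).im : ℝ) : ℂ)) = v := by
      funext i
      simp only [Pi.add_apply, Pi.smul_apply, smul_eq_mul]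
      rw [mul_comm]
      exact Complex.re_add_im (v i)
    have hLv : L *ᵥ v = 0 := by
      rw [← hva, Matrix.mulVec_add, Matrix.mulVec_smul, ha, hb]
      simp
    rw [hfix v hAv] at hLv
    exact hv0 hLv
  have hvol : MeasureTheory.volume (↑(LinearMap.ker f) : Set (Fin N → ℝ)) = 0 :=
    MeasureTheory.Measure.addHaar_submodule MeasureTheory.volume _ hKner
  refine ⟨by rw [hT]; exact hvol, ?_⟩
  -- second part
  set μ := MeasureTheory.Measure.pi fun _ : Fin N =>
    MeasureTheory.volume.restrict (Set.Icc (0 : ℝ) 1) with hμ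
  have hμeq : μ = MeasureTheory.volume.restrict
      (Set.pi Set.univ fun _ : Fin N => Set.Icc (0 : ℝ) 1) := by
    rw [hμ]
    apply MeasureTheory.Measure.pi_eq
    intro s hs
    rw [MeasureTheory.Measure.restrict_apply (MeasurableSet.univ_pi hs),
      ← Set.pi_inter_distrib, MeasureTheory.volume_pi_pi]
    exact Finset.prod_congr rfl fun i _ =>
      (MeasureTheory.Measure.restrict_apply (hs i)).symm
  have hμT : μ (↑(LinearMap.ker f) : Set (Fin N → ℝ)) = 0 := by
    rw [hμeq]
    exact le_antisymm ((MeasureTheory.Measure.restrict_apply_le _ _).trans hvol.le) (by positivity)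
  have hTmeas : MeasurableSet (↑(LinearMap.ker f) : Set (Fin N → ℝ)) := by
    have : IsClosed (↑(LinearMap.ker f) : Set (Fin N → ℝ)) :=
      (LinearMap.ker f).closed_of_finiteDimensional
    exact this.measurableSet
  have hμuniv : μ Set.univ = 1 := by
    rw [hμ, MeasureTheory.Measure.pi_univ]
    simp [Real.volume_Icc]
  have hsub : (↑(LinearMap.ker f) : Set (Fin N → ℝ))ᶜ ⊆ {y : Fin N → ℝ | ∃ u : Fin N → ℂ,
      Filter.Tendsto (fun n => ((1 - Q⁻¹ ^ 2 * Aᴴ * A) ^ n) *ᵥ fun i => (y i : ℂ))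
        Filter.atTop (nhds u) ∧ u ≠ 0 ∧ A *ᵥ u = 0} := by
    intro y hy
    refine ⟨L *ᵥ fun i => ((y i : ℝ) : ℂ), hBlim _, ?_, hAu _⟩
    intro h0
    apply hy
    simp only [SetLike.mem_coe, LinearMap.mem_ker, hfapp y]
    exact h0
  have hcompl : μ (↑(LinearMap.ker f) : Set (Fin N → ℝ))ᶜ = 1 := by
    rw [MeasureTheory.measure_compl hTmeas (by rw [hμT]; exact ENNReal.zero_ne_top), hμT,
      hμuniv, tsub_zero]
  refine le_antisymm ?_ ?_
  · rw [← hμuniv]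
    exact MeasureTheory.measure_mono (Set.subset_univ _)
  · rw [← hcompl]
    exact MeasureTheory.measure_mono hsub
end

section
/- Let A be an N×N complex positive semidefinite matrix and let Q be an invertible diagonal matrix with real diagonal entries satisfying Q(i,i) ≥ Σ_j |A(i,j)| for every index i. Then for every initial vector x₀ ∈ ℂ^N, the sequence defined by x_{n+1} = (I − Q^{-1} A) x_n converges exponentially to a vector u satisfying A u = 0; precisely, there exist u ∈ ℂ^N with A u = 0 and r ∈ [0, 1) such that ‖Q^{1/2}(x_n − u)‖₂ ≤ ‖Q^{1/2} x₀‖₂ · rⁿ for all n ≥ 0. -/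
open Matrix BigOperators
open scoped ComplexOrder

lemma l2norm_sum_smul {N : ℕ} (W : OrthonormalBasis (Fin N) ℂ (EuclideanSpace ℂ (Fin N)))
    (d : Fin N → ℂ) :
    l2norm (∑ i, d i • ⇑(W i)) = Real.sqrt (∑ i, ‖d i‖ ^ 2) := by
  have h : (∑ i, d i • ⇑(W i)) = ⇑(W.repr.symm (WithLp.toLp 2 d)) := by
    rw [← W.sum_repr_symm]; simp only [WithLp.ofLp_sum, WithLp.ofLp_smul]
  rw [h]
  have h2 : l2norm ⇑(W.repr.symm (WithLp.toLp 2 d))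
      = ‖W.repr.symm (WithLp.toLp 2 d)‖ := by
    rw [EuclideanSpace.norm_eq, l2norm]
  rw [h2, LinearIsometryEquiv.norm_map, EuclideanSpace.norm_eq]

lemma key_ineq {N : ℕ} (A : Matrix (Fin N) (Fin N) ℂ)
    (hsym : ∀ i j, ‖A i j‖ = ‖A j i‖)
    (q s : Fin N → ℝ) (hs : ∀ i, 0 < s i) (hsq : ∀ i, s i * s i = q i)
    (hq : ∀ i, ∑ j, ‖A i j‖ ≤ q i) (v : Fin N → ℂ) :
    ∑ i, ∑ j, ‖A i j‖ * ((‖v i‖ / s i) * (‖v j‖ / s j))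
      ≤ ∑ i, ‖v i‖ ^ 2 := by
  set a : Fin N → ℝ := fun i => ‖v i‖ / s i with ha
  have step1 : ∑ i, ∑ j, ‖A i j‖ * (a i * a j)
      ≤ ∑ i, ∑ j, ‖A i j‖ * ((a i ^ 2 + a j ^ 2) / 2) := by
    refine Finset.sum_le_sum fun i _ => Finset.sum_le_sum fun j _ => ?_
    have := norm_nonneg (A i j)
    nlinarith [sq_nonneg (a i - a j)]
  have step2 : ∑ i, ∑ j, ‖A i j‖ * ((a i ^ 2 + a j ^ 2) / 2)
      = ∑ i, (∑ j, ‖A i j‖) * a i ^ 2 := by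
    have e1 : ∀ i j, ‖A i j‖ * ((a i ^ 2 + a j ^ 2) / 2)
        = ‖A i j‖ * a i ^ 2 / 2 + ‖A i j‖ * a j ^ 2 / 2 := by
      intro i j; ring
    simp only [e1, Finset.sum_add_distrib]
    have e2 : ∑ i, ∑ j, ‖A i j‖ * a j ^ 2 / 2
        = ∑ i, ∑ j, ‖A i j‖ * a i ^ 2 / 2 := by
      rw [Finset.sum_comm]
      exact Finset.sum_congr rfl fun i _ => Finset.sum_congr rfl fun j _ => by rw [hsym]
    rw [e2, ← Finset.sum_add_distrib]
    refine Finset.sum_congr rfl fun i _ => ?_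
    rw [← Finset.sum_add_distrib, Finset.sum_mul]
    exact Finset.sum_congr rfl fun j _ => by ring
  have step3 : ∑ i, (∑ j, ‖A i j‖) * a i ^ 2 ≤ ∑ i, ‖v i‖ ^ 2 := by
    refine Finset.sum_le_sum fun i _ => ?_
    have h1 : (∑ j, ‖A i j‖) * a i ^ 2 ≤ q i * a i ^ 2 :=
      mul_le_mul_of_nonneg_right (hq i) (sq_nonneg _)
    refine h1.trans_eq ?_
    rw [ha]
    have hsi := (hs i).ne'
    field_simp
    rw [← hsq i]; ring
  calc _ ≤ _ := step1
    _ = _ := step2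
    _ ≤ _ := step3

/-- Let `A` be an `N × N` complex positive semidefinite matrix and `Q` an
invertible diagonal matrix with real diagonal entries satisfying
`Q(i,i) ≥ Σ_j |A(i,j)|` for every `i`.  Then for every initial vector `x₀`, the sequence
`x_{n+1} = (I - Q⁻¹ A) x_n` converges exponentially to a vector `u` with `A u = 0`:
there exist `u` with `A u = 0` and `r ∈ [0,1)` such that
`‖Q^{1/2}(x_n - u)‖₂ ≤ ‖Q^{1/2} x₀‖₂ rⁿ` for all `n`. -/
theorem stmt_7 {N : ℕ} (A : Matrix (Fin N) (Fin N) ℂ) (hA : A.PosSemidef)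
    (q : Fin N → ℝ) (Q : Matrix (Fin N) (Fin N) ℂ)
    (hQdiag : Q = Matrix.diagonal fun i => (q i : ℂ))
    (hQinv : IsUnit Q)
    (hq : ∀ i, ∑ j, ‖A i j‖ ≤ q i)
    (x₀ : Fin N → ℂ) (x : ℕ → Fin N → ℂ) (hx0 : x 0 = x₀)
    (hxrec : ∀ n, x (n + 1) = (1 - Q⁻¹ * A) *ᵥ x n) :
    ∃ (u : Fin N → ℂ) (r : ℝ), A *ᵥ u = 0 ∧ 0 ≤ r ∧ r < 1 ∧
      ∀ n, l2norm ((Matrix.diagonal fun i => (Real.sqrt (q i) : ℂ)) *ᵥ (x n - u)) ≤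
        l2norm ((Matrix.diagonal fun i => (Real.sqrt (q i) : ℂ)) *ᵥ x₀) * r ^ n := by
  classical
  -- positivity of q
  have hqpos : ∀ i, 0 < q i := by
    intro i
    have h0 : (0:ℝ) ≤ ∑ j, ‖A i j‖ :=
      Finset.sum_nonneg fun j _ => norm_nonneg _
    rcases (h0.trans (hq i)).lt_or_eq with h | h
    · exact h
    · exfalso
      have hdet : IsUnit Q.det := (Matrix.isUnit_iff_isUnit_det Q).mp hQinv
      rw [hQdiag, Matrix.det_diagonal] at hdet
      have hne := hdet.ne_zero
      exact hne (Finset.prod_eq_zero (Finset.mem_univ i) (by rw [← h]; norm_num))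
  set s : Fin N → ℝ := fun i => Real.sqrt (q i) with hs_def
  have hspos : ∀ i, 0 < s i := fun i => Real.sqrt_pos.mpr (hqpos i)
  have hsq : ∀ i, s i * s i = q i := fun i => Real.mul_self_sqrt (hqpos i).le
  have hsC : ∀ i, (s i : ℂ) ≠ 0 := fun i => by
    exact_mod_cast (hspos i).ne'
  set S : Matrix (Fin N) (Fin N) ℂ := Matrix.diagonal fun i => (s i : ℂ) with hS
  set Sinv : Matrix (Fin N) (Fin N) ℂ := Matrix.diagonal fun i => ((s i : ℂ))⁻¹ with hSinv
  have hSS : S * Sinv = 1 := by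
    rw [hS, hSinv, Matrix.diagonal_mul_diagonal]
    have : (fun i => (s i : ℂ) * (s i : ℂ)⁻¹) = fun _ => (1:ℂ) :=
      funext fun i => mul_inv_cancel₀ (hsC i)
    rw [this, Matrix.diagonal_one]
  have hSinvS : Sinv * S = 1 := by
    rw [hS, hSinv, Matrix.diagonal_mul_diagonal]
    have : (fun i => (s i : ℂ)⁻¹ * (s i : ℂ)) = fun _ => (1:ℂ) :=
      funext fun i => inv_mul_cancel₀ (hsC i)
    rw [this, Matrix.diagonal_one]
  have hQinv_eq : Q⁻¹ = Sinv * Sinv := by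
    apply Matrix.inv_eq_right_inv
    rw [hQdiag, hSinv, Matrix.diagonal_mul_diagonal, Matrix.diagonal_mul_diagonal]
    have : (fun i => (q i : ℂ) * ((s i : ℂ)⁻¹ * (s i : ℂ)⁻¹)) = fun _ => (1:ℂ) := by
      funext i
      have hq' : (q i : ℂ) = (s i : ℂ) * (s i : ℂ) := by
        rw [← Complex.ofReal_mul, hsq i]
      rw [hq', show ((s i:ℂ) * (s i:ℂ)) * ((s i:ℂ)⁻¹ * (s i:ℂ)⁻¹)
        = ((s i:ℂ) * (s i:ℂ)⁻¹) * ((s i:ℂ) * (s i:ℂ)⁻¹) from by ring,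
        mul_inv_cancel₀ (hsC i), mul_one]
    rw [this, Matrix.diagonal_one]
  set B : Matrix (Fin N) (Fin N) ℂ := Sinv * A * Sinv with hB_def
  have hSinvH : Sinvᴴ = Sinv := by
    have hst : (star fun i => ((s i : ℂ))⁻¹) = fun i => ((s i : ℂ))⁻¹ := by
      funext i
      simp [← Complex.ofReal_inv, Complex.conj_ofReal]
    rw [hSinv, Matrix.diagonal_conjTranspose, hst]
  have hBps : B.PosSemidef := by
    have h := hA.mul_mul_conjTranspose_same Sinv
    rwa [hSinvH] at h
  have hBH : B.IsHermitian := hBps.1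
  set μ : Fin N → ℝ := hBH.eigenvalues with hμ_def
  set W := hBH.eigenvectorBasis with hW
  have hμ0 : ∀ i, 0 ≤ μ i := fun i => hBps.eigenvalues_nonneg i
  -- entrywise description of B
  have hBentry : ∀ i j, ‖B i j‖
      = (s i)⁻¹ * ‖A i j‖ * (s j)⁻¹ := by
    intro i j
    rw [hB_def, hSinv, Matrix.mul_diagonal, Matrix.diagonal_mul]
    rw [norm_mul, norm_mul, norm_inv, norm_inv, Complex.norm_real, Complex.norm_real, Real.norm_eq_abs, Real.norm_eq_abs,
      abs_of_pos (hspos i), abs_of_pos (hspos j)]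
  have habs_sym : ∀ i j, ‖A i j‖ = ‖A j i‖ := by
    intro i j
    have h : A j i = (starRingEnd ℂ) (A i j) := by
      conv_lhs => rw [← hA.1]
      rfl
    rw [h]
    exact (Complex.norm_conj _).symm
  -- quadratic form bound
  have hquad : ∀ v : Fin N → ℂ,
      (dotProduct (star v) (B *ᵥ v)).re ≤ ∑ i, ‖v i‖ ^ 2 := by
    intro v
    have hexp : dotProduct (star v) (B *ᵥ v)
        = ∑ i, ∑ j, (starRingEnd ℂ) (v i) * (B i j * v j) := by
      simp [dotProduct, Matrix.mulVec, Finset.mul_sum]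
    rw [hexp]
    have h1 : (∑ i, ∑ j, (starRingEnd ℂ) (v i) * (B i j * v j)).re
        = ∑ i, ∑ j, ((starRingEnd ℂ) (v i) * (B i j * v j)).re := by
      rw [Complex.re_sum]
      exact Finset.sum_congr rfl fun i _ => Complex.re_sum _ _
    rw [h1]
    have h2 : ∑ i, ∑ j, ((starRingEnd ℂ) (v i) * (B i j * v j)).re
        ≤ ∑ i, ∑ j, ‖A i j‖
            * ((‖v i‖ / s i) * (‖v j‖ / s j)) := by
      refine Finset.sum_le_sum fun i _ => Finset.sum_le_sum fun j _ => ?_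
      refine (Complex.re_le_norm _).trans ?_
      rw [norm_mul, norm_mul, Complex.norm_conj, hBentry i j]
      rw [div_eq_mul_inv, div_eq_mul_inv]
      ring_nf
      exact le_of_eq (by ring)
    exact h2.trans (key_ineq A habs_sym q s hspos hsq hq v)
  -- eigenvalues at most 1
  have hμ1 : ∀ i, μ i ≤ 1 := by
    intro i
    have he := hBH.eigenvalues_eq i
    have hw1 : ∑ j, ‖(W i) j‖ ^ 2 = 1 := by
      have hnorm := W.orthonormal.1 i
      rw [EuclideanSpace.norm_eq] at hnorm
      have := Real.sqrt_eq_one.mp hnorm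
      rw [← this]
    calc μ i = RCLike.re (dotProduct (star ⇑(W i)) (B *ᵥ ⇑(W i))) := he
      _ = (dotProduct (star ⇑(W i)) (B *ᵥ ⇑(W i))).re := rfl
      _ ≤ ∑ j, ‖(W i) j‖ ^ 2 := hquad _
      _ = 1 := hw1
  -- coefficients
  set c : Fin N → ℂ := fun i => W.repr (WithLp.toLp 2 (S *ᵥ x₀ : Fin N → ℂ)) i
    with hc_def
  set e : ℕ → Fin N → ℂ := fun n i => ((1 - μ i : ℝ) : ℂ) ^ n * c i with he_def
  have hmulVec_sum : ∀ (M : Matrix (Fin N) (Fin N) ℂ) (f : Fin N → Fin N → ℂ),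
      M *ᵥ (∑ i, f i) = ∑ i, M *ᵥ f i := by
    intro M f
    exact map_sum M.mulVecLin f Finset.univ
  have hBw : ∀ i, B *ᵥ ⇑(W i) = ((μ i : ℂ)) • ⇑(W i) := by
    intro i
    rw [hBH.mulVec_eigenvectorBasis i]
    funext j
    simp [Complex.real_smul]
    rfl
  have hyrep : ∀ n, S *ᵥ x n = ∑ i, e n i • ⇑(W i) := by
    intro n
    induction n with
    | zero =>
      rw [hx0]
      have h := W.sum_repr (WithLp.toLp 2 (S *ᵥ x₀ : Fin N → ℂ))
      have : ∑ i, e 0 i • ⇑(W i) = ∑ i, c i • ⇑(W i) := by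
        refine Finset.sum_congr rfl fun i _ => ?_
        rw [he_def]; simp
      rw [this]
      have h' := congrArg WithLp.ofLp h
      simp only [WithLp.ofLp_sum, WithLp.ofLp_smul] at h'
      exact h'.symm
    | succ n ih =>
      have hmat : S * (1 - Q⁻¹ * A) = (1 - B) * S := by
        rw [hQinv_eq, hB_def]
        rw [mul_sub, sub_mul, mul_one, one_mul]
        congr 1
        rw [← mul_assoc, ← mul_assoc, hSS, one_mul, mul_assoc, mul_assoc, hSinvS, mul_one]
      rw [hxrec n, Matrix.mulVec_mulVec, hmat, ← Matrix.mulVec_mulVec, ih]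
      rw [hmulVec_sum]
      refine Finset.sum_congr rfl fun i _ => ?_
      rw [Matrix.mulVec_smul, Matrix.sub_mulVec, Matrix.one_mulVec, hBw i]
      rw [smul_sub, smul_smul, ← sub_smul]
      rw [he_def]
      simp only []
      rw [pow_succ]
      congr 1
      push_cast
      ring
  -- the limit vector
  set u' : Fin N → ℂ := ∑ i, (if μ i = 0 then c i else 0) • ⇑(W i) with hu'_def
  set u : Fin N → ℂ := Sinv *ᵥ u' with hu_def
  have hBu' : B *ᵥ u' = 0 := by
    rw [hu'_def, hmulVec_sum]
    refine Finset.sum_eq_zero fun i _ => ?_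
    rw [Matrix.mulVec_smul, hBw i]
    by_cases h : μ i = 0
    · simp [h]
    · simp [h]
  have hAu : A *ᵥ u = 0 := by
    have hASinv : A * Sinv = S * B := by
      rw [hB_def, ← mul_assoc, ← mul_assoc, hSS, one_mul]
    rw [hu_def, Matrix.mulVec_mulVec, hASinv, ← Matrix.mulVec_mulVec, hBu',
      Matrix.mulVec_zero]
  have hSu : S *ᵥ u = u' := by
    rw [hu_def, Matrix.mulVec_mulVec, hSS, Matrix.one_mulVec]
  -- the rate
  set r0 : NNReal := Finset.univ.sup fun i => if μ i = 0 then 0 else (1 - μ i).toNNReal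
    with hr0_def
  set r : ℝ := (r0 : ℝ) with hr_def
  have hr_nonneg : (0:ℝ) ≤ r := r0.coe_nonneg
  have hr_lt : r < 1 := by
    rw [hr_def, ← NNReal.coe_one, NNReal.coe_lt_coe, hr0_def]
    refine Finset.sup_lt_iff (by norm_num) |>.mpr fun i _ => ?_
    by_cases h : μ i = 0
    · simp [h]
    · simp only [h, if_false]
      rw [← Real.toNNReal_one]
      refine (Real.toNNReal_lt_toNNReal_iff one_pos).mpr ?_
      have := (hμ0 i).lt_of_ne (Ne.symm h)
      linarith
  have hr_ge : ∀ i, μ i ≠ 0 → 1 - μ i ≤ r := by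
    intro i h
    have h1 : ((1 - μ i).toNNReal : ℝ) = 1 - μ i :=
      Real.coe_toNNReal _ (by linarith [hμ1 i])
    rw [hr_def, ← h1, NNReal.coe_le_coe]
    have := Finset.le_sup (f := fun i => if μ i = 0 then 0 else (1 - μ i).toNNReal)
      (Finset.mem_univ i)
    simpa [h] using this
  refine ⟨u, r, hAu, hr_nonneg, hr_lt, fun n => ?_⟩
  -- rewrite both sides
  have hL : S *ᵥ (x n - u) = ∑ i, (if μ i = 0 then 0 else e n i) • ⇑(W i) := by
    have : S *ᵥ (x n - u) = S *ᵥ x n - S *ᵥ u := by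
      rw [Matrix.mulVec_sub]
    rw [this, hSu, hyrep n, hu'_def, ← Finset.sum_sub_distrib]
    refine Finset.sum_congr rfl fun i _ => ?_
    rw [← sub_smul]
    congr 1
    by_cases h : μ i = 0
    · simp [h, he_def]
    · simp [h]
  have hR : (S *ᵥ x₀ : Fin N → ℂ) = ∑ i, c i • ⇑(W i) := by
    have h := hyrep 0
    rw [hx0] at h
    rw [h]
    refine Finset.sum_congr rfl fun i _ => ?_
    rw [he_def]; simp
  rw [hL, hR, l2norm_sum_smul, l2norm_sum_smul]
  -- final numeric estimate
  have hterm : ∀ i, ‖if μ i = 0 then 0 else e n i‖ ^ 2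
      ≤ (‖c i‖ * r ^ n) ^ 2 := by
    intro i
    by_cases h : μ i = 0
    · simp only [h, if_true]
      simp
      positivity
    · simp only [h, if_false, he_def]
      have habs : ‖((1 - μ i : ℝ) : ℂ) ^ n * c i‖
          = (1 - μ i) ^ n * ‖c i‖ := by
        rw [norm_mul, norm_pow, Complex.norm_real, Real.norm_eq_abs, abs_of_nonneg (by linarith [hμ1 i])]
      rw [habs]
      have h1 : (1 - μ i) ^ n ≤ r ^ n :=
        pow_le_pow_left₀ (by linarith [hμ1 i]) (hr_ge i h) n
      have h2 : (1 - μ i) ^ n * ‖c i‖ ≤ ‖c i‖ * r ^ n := by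
        rw [mul_comm (‖c i‖) (r ^ n)]
        exact mul_le_mul_of_nonneg_right h1 (norm_nonneg _)
      exact pow_le_pow_left₀ (mul_nonneg (pow_nonneg (by linarith [hμ1 i]) n) (norm_nonneg _)) h2 2
  calc Real.sqrt (∑ i, ‖if μ i = 0 then 0 else e n i‖ ^ 2)
      ≤ Real.sqrt (∑ i, (‖c i‖ * r ^ n) ^ 2) :=
        Real.sqrt_le_sqrt (Finset.sum_le_sum fun i _ => hterm i)
    _ = Real.sqrt ((∑ i, ‖c i‖ ^ 2) * (r ^ n) ^ 2) := by
        rw [Finset.sum_mul]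
        congr 1
        exact Finset.sum_congr rfl fun i _ => by ring
    _ = Real.sqrt (∑ i, ‖c i‖ ^ 2) * r ^ n := by
        rw [Real.sqrt_mul (Finset.sum_nonneg fun i _ => sq_nonneg _),
          Real.sqrt_sq (by positivity)]
end

section
/- Let H be an N×N Hermitian complex matrix with minimal eigenvalue λ_min, and let Q be an invertible diagonal matrix with real diagonal entries satisfying Q(i,i) ≥ Σ_j |H(i,j) − λ_min δ(i,j)| for every index i, where δ is the Kronecker delta. Then for every initial vector x₀ ∈ ℂ^N, the sequence defined by x_{n+1} = x_n − Q^{-1}(H − λ_min I) x_n converges exponentially to a vector u satisfying H u = λ_min u; precisely, there exist u ∈ ℂ^N with H u = λ_min u and r ∈ [0,1) such that ‖Q^{1/2}(x_n − u)‖₂ ≤ ‖Q^{1/2} x₀‖₂ · rⁿ for all n ≥ 0. -/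
open Matrix BigOperators
open scoped ComplexOrder

lemma psd_sub {N : ℕ} (H : Matrix (Fin N) (Fin N) ℂ) (hH : H.IsHermitian) (l : ℝ)
    (hmin : ∀ i, l ≤ hH.eigenvalues i) : (H - (l : ℂ) • 1).PosSemidef := by
  have hU := hH.spectral_theorem
  set U : Matrix (Fin N) (Fin N) ℂ := (hH.eigenvectorUnitary : Matrix (Fin N) (Fin N) ℂ) with hUdef
  have hUU : U * Uᴴ = 1 := mem_unitaryGroup_iff.mp hH.eigenvectorUnitary.2
  have key : H - (l : ℂ) • 1 =
      U * Matrix.diagonal (fun i => ((hH.eigenvalues i - l : ℝ) : ℂ)) * Uᴴ := by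
    have h1 : ((l:ℂ) • (1 : Matrix (Fin N) (Fin N) ℂ)) = U * ((l:ℂ) • 1) * Uᴴ := by
      rw [Matrix.mul_smul, Matrix.smul_mul, Matrix.mul_one, hUU]
    calc H - (l : ℂ) • 1
        = U * Matrix.diagonal (RCLike.ofReal ∘ hH.eigenvalues) * Uᴴ - U * ((l:ℂ) • 1) * Uᴴ := by
          rw [← h1]; exact congrArg (· - _) hU
      _ = U * (Matrix.diagonal (RCLike.ofReal ∘ hH.eigenvalues) - (l:ℂ) • 1) * Uᴴ := by
          rw [Matrix.mul_sub, Matrix.sub_mul]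
      _ = U * Matrix.diagonal (fun i => ((hH.eigenvalues i - l : ℝ) : ℂ)) * Uᴴ := by
          congr 2
          ext i j
          rcases eq_or_ne i j with h | h
          · subst h
            simp [Matrix.diagonal_apply_eq, Matrix.one_apply_eq, Complex.ofReal_sub]
          · simp [Matrix.diagonal_apply_ne _ h, Matrix.one_apply_ne h]
  rw [key]
  have : (Matrix.diagonal (fun i => ((hH.eigenvalues i - l : ℝ) : ℂ))).PosSemidef := by
    rw [Matrix.posSemidef_diagonal_iff]
    intro i
    rw [Complex.le_def]
    constructor
    · simp [sub_nonneg, hmin i]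
    · simp
  simpa [Matrix.star_eq_conjTranspose] using this.mul_mul_conjTranspose_same U

lemma quad_bound {N : ℕ} (A : Matrix (Fin N) (Fin N) ℂ) (hA : A.IsHermitian)
    (q : Fin N → ℝ) (hq : ∀ i, ∑ j, ‖A i j‖ ≤ q i) (w : Fin N → ℂ) :
    (star w ⬝ᵥ A *ᵥ w).re ≤ ∑ i, q i * ‖w i‖ ^ 2 := by
  set a : Fin N → Fin N → ℝ := fun i j => ‖A i j‖ with ha
  set b : Fin N → ℝ := fun i => ‖w i‖ with hb
  have hb0 : ∀ i, 0 ≤ b i := fun i => norm_nonneg _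
  have ha0 : ∀ i j, 0 ≤ a i j := fun i j => norm_nonneg _
  have hsym : ∀ i j, a i j = a j i := by
    intro i j
    have h := congrFun (congrFun hA j) i
    rw [Matrix.conjTranspose_apply] at h
    simp only [ha]
    rw [← h]
    exact (Complex.norm_conj _).symm
  have h1 : (star w ⬝ᵥ A *ᵥ w).re ≤ ∑ i, ∑ j, a i j * (b i * b j) := by
    have hexp : star w ⬝ᵥ A *ᵥ w = ∑ i, ∑ j, (starRingEnd ℂ) (w i) * (A i j * w j) := by
      simp [dotProduct, Matrix.mulVec, Finset.mul_sum]
    rw [hexp]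
    refine le_trans (Complex.re_le_norm _) ?_
    refine le_trans (norm_sum_le _ _) ?_
    refine Finset.sum_le_sum fun i _ => ?_
    refine le_trans (norm_sum_le _ _) ?_
    refine Finset.sum_le_sum fun j _ => ?_
    rw [norm_mul, norm_mul, Complex.norm_conj]
    simp only [ha, hb]
    nlinarith [norm_nonneg (w i), norm_nonneg (w j), norm_nonneg (A i j)]
  refine le_trans h1 ?_
  have h2 : ∑ i, ∑ j, a i j * (b i * b j) ≤ ∑ i, ∑ j, a i j * ((b i ^ 2 + b j ^ 2) / 2) := by
    refine Finset.sum_le_sum fun i _ => Finset.sum_le_sum fun j _ => ?_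
    refine mul_le_mul_of_nonneg_left ?_ (ha0 i j)
    nlinarith [sq_nonneg (b i - b j)]
  refine le_trans h2 ?_
  have h3 : ∑ i, ∑ j, a i j * ((b i ^ 2 + b j ^ 2) / 2)
      = ∑ i, (∑ j, a i j) * b i ^ 2 := by
    have e1 : ∀ i j, a i j * ((b i ^ 2 + b j ^ 2) / 2)
        = (a i j * b i ^ 2) / 2 + (a i j * b j ^ 2) / 2 := fun i j => by ring
    simp_rw [e1, Finset.sum_add_distrib]
    have swap : ∑ i, ∑ j, a i j * b j ^ 2 / 2 = ∑ i, ∑ j, a i j * b i ^ 2 / 2 := by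
      rw [Finset.sum_comm]
      exact Finset.sum_congr rfl fun j _ => Finset.sum_congr rfl fun i _ => by rw [hsym]
    rw [swap, ← Finset.sum_add_distrib]
    refine Finset.sum_congr rfl fun i _ => ?_
    rw [← Finset.sum_add_distrib, Finset.sum_mul]
    refine Finset.sum_congr rfl fun j _ => by ring
  rw [h3]
  refine Finset.sum_le_sum fun i _ => ?_
  exact mul_le_mul_of_nonneg_right (hq i) (sq_nonneg _)

/-- Let `H` be an `N × N` Hermitian complex matrix with minimal eigenvalue
`λ_min`, and let `Q` be an invertible diagonal matrix with real diagonal entries satisfying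
`Q(i,i) ≥ Σ_j |H(i,j) - λ_min δ(i,j)|` for every `i`.  Then for every initial vector `x₀`,
the sequence `x_{n+1} = x_n - Q⁻¹ (H - λ_min I) x_n` converges exponentially to a vector
`u` with `H u = λ_min u`: there exist `u` with `H u = λ_min u` and `r ∈ [0,1)` such that
`‖Q^{1/2}(x_n - u)‖₂ ≤ ‖Q^{1/2} x₀‖₂ rⁿ` for all `n`. -/
theorem stmt_10 {N : ℕ} (H : Matrix (Fin N) (Fin N) ℂ) (hH : H.IsHermitian)
    (lmin : ℝ)
    (hmin1 : ∃ i, hH.eigenvalues i = lmin)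
    (hmin2 : ∀ i, lmin ≤ hH.eigenvalues i)
    (q : Fin N → ℝ) (Q : Matrix (Fin N) (Fin N) ℂ)
    (hQdiag : Q = Matrix.diagonal fun i => (q i : ℂ))
    (hQinv : IsUnit Q)
    (hq : ∀ i, ∑ j, ‖(H - (lmin : ℂ) • 1) i j‖ ≤ q i)
    (x₀ : Fin N → ℂ) (x : ℕ → Fin N → ℂ) (hx0 : x 0 = x₀)
    (hxrec : ∀ n, x (n + 1) = x n - Q⁻¹ *ᵥ ((H - (lmin : ℂ) • 1) *ᵥ x n)) :
    ∃ (u : Fin N → ℂ) (r : ℝ), H *ᵥ u = (lmin : ℂ) • u ∧ 0 ≤ r ∧ r < 1 ∧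
      ∀ n, l2norm ((Matrix.diagonal fun i => (Real.sqrt (q i) : ℂ)) *ᵥ (x n - u)) ≤
        l2norm ((Matrix.diagonal fun i => (Real.sqrt (q i) : ℂ)) *ᵥ x₀) * r ^ n := by
  classical
  set A : Matrix (Fin N) (Fin N) ℂ := H - (lmin : ℂ) • 1 with hAdef
  have hA : A.IsHermitian := by
    have h1 : ((lmin : ℂ) • (1 : Matrix (Fin N) (Fin N) ℂ)).IsHermitian := by
      unfold Matrix.IsHermitian
      rw [Matrix.conjTranspose_smul, Matrix.conjTranspose_one]
      simp [Complex.star_def, Complex.conj_ofReal]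
    exact hH.sub h1
  have hApsd : A.PosSemidef := psd_sub H hH lmin hmin2
  -- q is positive
  have hqNonneg : ∀ i, 0 ≤ q i := fun i =>
    le_trans (Finset.sum_nonneg fun j _ => norm_nonneg _) (hq i)
  have hqne : ∀ i, (q i : ℂ) ≠ 0 := by
    intro i hzero
    have hdet : IsUnit Q.det := (Matrix.isUnit_iff_isUnit_det Q).mp hQinv
    rw [hQdiag, Matrix.det_diagonal] at hdet
    exact hdet.ne_zero (Finset.prod_eq_zero (Finset.mem_univ i) hzero)
  have hq0 : ∀ i, 0 < q i := fun i =>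
    lt_of_le_of_ne (hqNonneg i) fun h => hqne i (by exact_mod_cast h.symm)
  -- square roots
  set s : Fin N → ℝ := fun i => Real.sqrt (q i) with hsdef
  have hs0 : ∀ i, 0 < s i := fun i => Real.sqrt_pos.mpr (hq0 i)
  have hsq : ∀ i, s i * s i = q i := fun i => Real.mul_self_sqrt (hqNonneg i)
  have hsne : ∀ i, (s i : ℂ) ≠ 0 := fun i => by
    exact_mod_cast (Complex.ofReal_ne_zero.mpr (hs0 i).ne')
  set S : Matrix (Fin N) (Fin N) ℂ := Matrix.diagonal (fun i => (s i : ℂ)) with hSdef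
  set S' : Matrix (Fin N) (Fin N) ℂ := Matrix.diagonal (fun i => ((s i)⁻¹ : ℂ)) with hS'def
  have hSS' : S * S' = 1 := by
    rw [hSdef, hS'def, Matrix.diagonal_mul_diagonal, ← Matrix.diagonal_one]
    exact congrArg Matrix.diagonal (funext fun i => mul_inv_cancel₀ (hsne i))
  have hS'S : S' * S = 1 := by
    rw [hSdef, hS'def, Matrix.diagonal_mul_diagonal, ← Matrix.diagonal_one]
    exact congrArg Matrix.diagonal (funext fun i => inv_mul_cancel₀ (hsne i))
  have hS'H : S'ᴴ = S' := by
    rw [hS'def, Matrix.diagonal_conjTranspose]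
    exact congrArg Matrix.diagonal (funext fun i => by
      simp [Complex.star_def, map_inv₀, Complex.conj_ofReal])
  set B : Matrix (Fin N) (Fin N) ℂ := S' * A * S' with hBdef
  have hB : B.IsHermitian := by
    unfold Matrix.IsHermitian
    rw [hBdef, Matrix.conjTranspose_mul, Matrix.conjTranspose_mul, hS'H, hA.eq]
    rw [Matrix.mul_assoc]
  set b := hB.eigenvectorBasis with hbdef
  set d : Fin N → ℝ := hB.eigenvalues with hddef
  set v : Fin N → Fin N → ℂ := fun j => ⇑(b j) with hvdef
  have hBv : ∀ j, B *ᵥ v j = (d j : ℂ) • v j := by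
    intro j
    have h := hB.mulVec_eigenvectorBasis j
    rw [RCLike.real_smul_eq_coe_smul (K := ℂ)] at h
    exact h
  have hortho : ∀ j k, star (v j) ⬝ᵥ v k = if j = k then 1 else 0 := by
    intro j k
    have h := orthonormal_iff_ite.mp b.orthonormal j k
    rw [EuclideanSpace.inner_eq_star_dotProduct, dotProduct_comm] at h
    exact h
  have hvnorm : ∀ j, star (v j) ⬝ᵥ v j = 1 := fun j => by rw [hortho j j, if_pos rfl]
  have hdotS' : ∀ (z y : Fin N → ℂ), star z ⬝ᵥ (S' *ᵥ y) = star (S' *ᵥ z) ⬝ᵥ y := by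
    intro z y
    rw [Matrix.dotProduct_mulVec, Matrix.star_mulVec, hS'H]
  have hdotBv : ∀ j, star (v j) ⬝ᵥ (B *ᵥ v j) = (d j : ℂ) := by
    intro j
    rw [hBv j, dotProduct_smul, hvnorm j, smul_eq_mul, mul_one]
  have hBtoA : ∀ j, star (v j) ⬝ᵥ (B *ᵥ v j) = star (S' *ᵥ v j) ⬝ᵥ (A *ᵥ (S' *ᵥ v j)) := by
    intro j
    rw [hBdef, ← Matrix.mulVec_mulVec, ← Matrix.mulVec_mulVec, hdotS']
  have hdre : ∀ j, d j = (star (S' *ᵥ v j) ⬝ᵥ (A *ᵥ (S' *ᵥ v j))).re := by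
    intro j
    have h := (hBtoA j).symm.trans (hdotBv j)
    rw [h, Complex.ofReal_re]
  have hdot_self : ∀ (y : Fin N → ℂ), (star y ⬝ᵥ y).re = ∑ i, ‖y i‖ ^ 2 := by
    intro y
    rw [dotProduct, Complex.re_sum]
    refine Finset.sum_congr rfl fun i _ => ?_
    have : star y i * y i = ((Complex.normSq (y i) : ℝ) : ℂ) := by
      rw [Pi.star_apply, Complex.star_def, mul_comm, Complex.mul_conj]
    rw [this, Complex.ofReal_re, Complex.normSq_eq_norm_sq]
  have hd0 : ∀ j, 0 ≤ d j := by
    intro j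
    have h := hApsd.dotProduct_mulVec_nonneg (S' *ᵥ v j)
    rw [Complex.le_def] at h
    rw [hdre j]
    simpa using h.1
  have hd1 : ∀ j, d j ≤ 1 := by
    intro j
    have hqb := quad_bound A hA q hq (S' *ᵥ v j)
    have hsum : ∑ i, q i * ‖(S' *ᵥ v j) i‖ ^ 2 = ∑ i, ‖v j i‖ ^ 2 := by
      refine Finset.sum_congr rfl fun i _ => ?_
      rw [hS'def, Matrix.mulVec_diagonal]
      rw [norm_mul]
      have habs : ‖(s i : ℂ)⁻¹‖ = (s i)⁻¹ := by
        rw [norm_inv, Complex.norm_real, Real.norm_eq_abs, abs_of_pos (hs0 i)]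
      rw [habs, mul_pow, ← mul_assoc]
      have : q i * ((s i)⁻¹) ^ 2 = 1 := by
        rw [sq]
        field_simp [(hs0 i).ne']
        rw [← hsq i]; ring
      rw [this, one_mul]
    have hone : ∑ i, ‖v j i‖ ^ 2 = 1 := by
      rw [← hdot_self (v j), hvnorm j, Complex.one_re]
    rw [hdre j]
    rw [hsum, hone] at hqb
    exact hqb
  -- dynamics
  set Y : ℕ → Fin N → ℂ := fun n => S *ᵥ x n with hYdef
  have hQinv' : Q⁻¹ = Matrix.diagonal (fun i => ((q i : ℂ))⁻¹) := by
    apply Matrix.inv_eq_right_inv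
    rw [hQdiag, Matrix.diagonal_mul_diagonal, ← Matrix.diagonal_one]
    exact congrArg Matrix.diagonal (funext fun i => mul_inv_cancel₀ (hqne i))
  have hSQinv : S * Q⁻¹ = S' := by
    rw [hQinv', hSdef, hS'def, Matrix.diagonal_mul_diagonal]
    refine congrArg Matrix.diagonal (funext fun i => ?_)
    have hqs : (q i : ℂ) = (s i : ℂ) * (s i : ℂ) := by
      rw [← Complex.ofReal_mul, hsq i]
    rw [hqs, mul_inv, ← mul_assoc, mul_inv_cancel₀ (hsne i), one_mul]
  have hYrec : ∀ n, Y (n+1) = Y n - B *ᵥ Y n := by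
    intro n
    show S *ᵥ x (n+1) = S *ᵥ x n - B *ᵥ (S *ᵥ x n)
    rw [hxrec n, Matrix.mulVec_sub]
    congr 1
    rw [Matrix.mulVec_mulVec, Matrix.mulVec_mulVec, hSQinv, Matrix.mulVec_mulVec, hBdef]
    have hBS : S' * A * S' * S = S' * A := by
      calc S' * A * S' * S = S' * A * (S' * S) := by rw [Matrix.mul_assoc]
        _ = S' * A := by rw [hS'S, Matrix.mul_one]
    rw [hBS]
  set c : ℕ → Fin N → ℂ := fun n j => star (v j) ⬝ᵥ Y n with hcdef
  have hdotB : ∀ j (y : Fin N → ℂ), star (v j) ⬝ᵥ (B *ᵥ y) = (d j : ℂ) * (star (v j) ⬝ᵥ y) := by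
    intro j y
    rw [Matrix.dotProduct_mulVec]
    have h1 : star (v j) ᵥ* B = (d j : ℂ) • star (v j) := by
      have h2 := congrArg star (hBv j)
      rw [Matrix.star_mulVec, hB.eq, star_smul, Complex.star_def, Complex.conj_ofReal] at h2
      exact h2
    rw [h1, smul_dotProduct, smul_eq_mul]
  have hcrec : ∀ n j, c n j = (1 - (d j : ℂ))^n * c 0 j := by
    intro n j
    induction n with
    | zero => simp
    | succ n ih =>
      have hstep : c (n+1) j = (1 - (d j:ℂ)) * c n j := by
        show star (v j) ⬝ᵥ Y (n+1) = _
        rw [hYrec n, dotProduct_sub, hdotB]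
        show c n j - (d j:ℂ) * c n j = _
        ring
      rw [hstep, ih, pow_succ]
      ring
  -- the limit vector
  set co : Fin N → ℂ := fun j => if d j = 0 then c 0 j else 0 with hcodef
  set W : Fin N → ℂ := ∑ j, co j • v j with hWdef
  set u : Fin N → ℂ := S' *ᵥ W with hudef
  have hBW : B *ᵥ W = 0 := by
    have hlin : B *ᵥ W = ∑ j, co j • (B *ᵥ v j) := by
      calc B *ᵥ W = B.mulVecLin (∑ j, co j • v j) := by rw [Matrix.mulVecLin_apply]
        _ = ∑ j, B.mulVecLin (co j • v j) := map_sum _ _ _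
        _ = ∑ j, co j • (B *ᵥ v j) := by
            refine Finset.sum_congr rfl fun j _ => ?_
            rw [_root_.map_smul, Matrix.mulVecLin_apply]
    rw [hlin]
    refine Finset.sum_eq_zero fun j _ => ?_
    rw [hBv j]
    by_cases h : d j = 0
    · have : (d j : ℂ) = 0 := by exact_mod_cast h
      rw [this, zero_smul, smul_zero]
    · have : co j = 0 := if_neg h
      rw [this, zero_smul]
  have hAu : A *ᵥ u = 0 := by
    have hASBS : A = S * B * S := by
      rw [hBdef]
      have h1 : S * (S' * A * S') * S = (S * S') * A * (S' * S) := by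
        simp only [Matrix.mul_assoc]
      rw [h1, hSS', hS'S, Matrix.one_mul, Matrix.mul_one]
    show A *ᵥ (S' *ᵥ W) = 0
    rw [Matrix.mulVec_mulVec, hASBS]
    have h2 : S * B * S * S' = S * B := by
      rw [Matrix.mul_assoc (S * B), hSS', Matrix.mul_one]
    rw [h2, ← Matrix.mulVec_mulVec, hBW, Matrix.mulVec_zero]
  have hHu : H *ᵥ u = (lmin : ℂ) • u := by
    have h1 : H *ᵥ u - (lmin:ℂ) • u = A *ᵥ u := by
      rw [hAdef, Matrix.sub_mulVec, Matrix.smul_mulVec, Matrix.one_mulVec]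
    exact sub_eq_zero.mp (h1.trans hAu)
  have hSu : S *ᵥ u = W := by
    show S *ᵥ (S' *ᵥ W) = W
    rw [Matrix.mulVec_mulVec, hSS', Matrix.one_mulVec]
  have hcW : ∀ k, star (v k) ⬝ᵥ W = co k := by
    intro k
    have expand : star (v k) ⬝ᵥ W = ∑ j, co j * (star (v k) ⬝ᵥ v j) := by
      simp only [hWdef, dotProduct, Finset.sum_apply, Pi.smul_apply, smul_eq_mul,
        Finset.mul_sum]
      rw [Finset.sum_comm]
      refine Finset.sum_congr rfl fun j _ => ?_
      refine Finset.sum_congr rfl fun i _ => by ring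
    rw [expand]
    have hterm : ∀ j, co j * (star (v k) ⬝ᵥ v j) = if j = k then co k else 0 := by
      intro j
      rw [hortho k j]
      rcases eq_or_ne j k with h | h
      · subst h; simp
      · simp [h, Ne.symm h]
    simp_rw [hterm]
    simp
  -- the rate
  set f : Fin N → NNReal := fun j => if d j = 0 then (0:NNReal) else Real.toNNReal (1 - d j)
    with hfdef
  set r : ℝ := ((Finset.univ.sup f : NNReal) : ℝ) with hrdef
  have hr0 : 0 ≤ r := (Finset.univ.sup f).coe_nonneg
  have hr1 : r < 1 := by
    have hlt : (Finset.univ.sup f) < (1 : NNReal) := by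
      rw [Finset.sup_lt_iff (by norm_num : (⊥ : NNReal) < 1)]
      intro j _
      show (if d j = 0 then (0:NNReal) else Real.toNNReal (1 - d j)) < 1
      by_cases h : d j = 0
      · simp [h]
      · rw [if_neg h]
        have hdj : 0 < d j := lt_of_le_of_ne (hd0 j) (Ne.symm h)
        rw [← Real.toNNReal_one]
        exact (Real.toNNReal_lt_toNNReal_iff (by norm_num)).mpr (by linarith)
    exact_mod_cast hlt
  have hrb : ∀ j, d j ≠ 0 → 1 - d j ≤ r := by
    intro j h
    refine (Real.le_coe_toNNReal _).trans ?_
    have h2 : Real.toNNReal (1 - d j) ≤ Finset.univ.sup f := by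
      have h3 := Finset.le_sup (f := f) (Finset.mem_univ j)
      rw [hfdef] at h3
      simpa [if_neg h] using h3
    exact_mod_cast h2
  -- Parseval
  have parseval : ∀ y : Fin N → ℂ,
      l2norm y = Real.sqrt (∑ j, ‖star (v j) ⬝ᵥ y‖ ^ 2) := by
    intro y
    have h1 : l2norm y = ‖(WithLp.equiv 2 (Fin N → ℂ)).symm y‖ := by
      rw [EuclideanSpace.norm_eq]
      simp [l2norm]
    have h2 : ‖(WithLp.equiv 2 (Fin N → ℂ)).symm y‖
        = ‖b.repr ((WithLp.equiv 2 (Fin N → ℂ)).symm y)‖ := (b.repr.norm_map _).symm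
    rw [h1, h2, EuclideanSpace.norm_eq]
    congr 1
    refine Finset.sum_congr rfl fun j _ => ?_
    rw [b.repr_apply_apply, EuclideanSpace.inner_eq_star_dotProduct, dotProduct_comm]
    simp
    rfl
  -- coordinate bound
  have hcoord : ∀ n j, ‖star (v j) ⬝ᵥ (Y n - W)‖ ≤ r ^ n * ‖c 0 j‖ := by
    intro n j
    have hdp : star (v j) ⬝ᵥ (Y n - W) = c n j - co j := by
      rw [dotProduct_sub, hcW j]
    rw [hdp]
    by_cases h : d j = 0
    · have hco : co j = c 0 j := if_pos h
      have hcn : c n j = c 0 j := by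
        rw [hcrec n j, h]
        simp
      rw [hcn, hco, sub_self]
      simp only [norm_zero]
      positivity
    · have hco : co j = 0 := if_neg h
      rw [hco, sub_zero, hcrec n j, norm_mul, norm_pow]
      have habs : ‖1 - (d j : ℂ)‖ = 1 - d j := by
        have : (1 : ℂ) - (d j : ℂ) = ((1 - d j : ℝ) : ℂ) := by push_cast; ring
        rw [this, Complex.norm_real, Real.norm_eq_abs, abs_of_nonneg (by linarith [hd1 j])]
      rw [habs]
      refine mul_le_mul_of_nonneg_right ?_ (norm_nonneg _)
      exact pow_le_pow_left₀ (by linarith [hd1 j]) (hrb j h) n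
  -- conclusion
  refine ⟨u, r, hHu, hr0, hr1, ?_⟩
  intro n
  have hL : S *ᵥ (x n - u) = Y n - W := by
    rw [Matrix.mulVec_sub, hSu]
  have hR : S *ᵥ x₀ = Y 0 := by rw [← hx0]
  rw [hL, hR, parseval, parseval]
  have hsumle : ∑ j, ‖star (v j) ⬝ᵥ (Y n - W)‖ ^ 2
      ≤ (r ^ n) ^ 2 * ∑ j, ‖star (v j) ⬝ᵥ Y 0‖ ^ 2 := by
    rw [Finset.mul_sum]
    refine Finset.sum_le_sum fun j _ => ?_
    have h1 := hcoord n j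
    calc ‖star (v j) ⬝ᵥ (Y n - W)‖ ^ 2
        ≤ (r ^ n * ‖c 0 j‖) ^ 2 :=
          pow_le_pow_left₀ (norm_nonneg _) h1 2
      _ = (r ^ n) ^ 2 * ‖star (v j) ⬝ᵥ Y 0‖ ^ 2 := by
          rw [hcdef]
          ring
  calc Real.sqrt (∑ j, ‖star (v j) ⬝ᵥ (Y n - W)‖ ^ 2)
      ≤ Real.sqrt ((r ^ n) ^ 2 * ∑ j, ‖star (v j) ⬝ᵥ Y 0‖ ^ 2) :=
        Real.sqrt_le_sqrt hsumle
    _ = r ^ n * Real.sqrt (∑ j, ‖star (v j) ⬝ᵥ Y 0‖ ^ 2) := by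
        rw [Real.sqrt_mul (sq_nonneg _), Real.sqrt_sq (pow_nonneg hr0 n)]
    _ = Real.sqrt (∑ j, ‖star (v j) ⬝ᵥ Y 0‖ ^ 2) * r ^ n := by ring
end

section
/- Let G = (V, E) be a connected, undirected, unweighted finite graph, let S₁, …, S_d be complex matrices indexed by V with S_k(i,j) = 0 whenever ρ(i,j) > 1, let A = Σ_{l₁=0}^{L₁} ··· Σ_{l_d=0}^{L_d} h_{l₁,…,l_d} S₁^{l₁} ··· S_d^{l_d}, let L = L₁ + ··· + L_d, and let Â = Σ_{l₁=0}^{L₁} ··· Σ_{l_d=0}^{L_d} |h_{l₁,…,l_d}| · |S₁|^{l₁} ··· |S_d|^{l_d}, where |S|(i,j) = |S(i,j)|. For a positive constant c, define the diagonal matrix Q̂_c with entries Q̂_c(i,i) = max_{j : ρ(j,i) ≤ L} max( Σ_{k∈V} Â(j,k), Σ_{k∈V} Â(k,j), c ). Then Q̂_c(i,i) ≥ P_A(i,i) for every i ∈ V, and consequently Q̂_c − P_A is positive semidefinite, where P_A is the diagonal preconditioning matrix of A computed with the geodesic-width parameter L. -/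
open Matrix BigOperators
open scoped ComplexOrder

/-- The diagonal entries of the matrix `Q̂_c` for a nonnegative matrix `Â` and width `L`:
`Q̂_c(i,i) = max_{j : ρ(j,i) ≤ L} max( Σ_{k∈V} Â(j,k), Σ_{k∈V} Â(k,j), c )`. -/
noncomputable def qhat {V : Type*} [Fintype V] (G : SimpleGraph V)
    (Ahat : Matrix V V ℝ) (L : ℕ) (c : ℝ) (i : V) : ℝ :=
  (gball G i L).sup'
    ⟨i, by simp [gball, SimpleGraph.dist_self]⟩
    fun j => max (max (∑ k, Ahat j k) (∑ k, Ahat k j)) c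

section Aux

variable {V : Type*} [Fintype V] [DecidableEq V]

/-- Entrywise nonnegativity of a product of entrywise-nonnegative real matrices. -/
lemma aux_prod_nonneg (ls : List (Matrix V V ℝ))
    (hls : ∀ M ∈ ls, ∀ i j, 0 ≤ M i j) : ∀ i j, 0 ≤ ls.prod i j := by
  induction ls with
  | nil =>
    intro i j
    simp only [List.prod_nil, Matrix.one_apply]
    split <;> norm_num
  | cons M t ih =>
    intro i j
    rw [List.prod_cons, Matrix.mul_apply]
    refine Finset.sum_nonneg fun k _ => mul_nonneg (hls M (List.mem_cons_self) i k)
      (ih (fun N hN => hls N (List.mem_cons_of_mem _ hN)) k j)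

/-- Entrywise domination for products. -/
lemma aux_prod_abs_le (lp : List (Matrix V V ℂ × Matrix V V ℝ))
    (hlp : ∀ p ∈ lp, ∀ i j, ‖p.1 i j‖ ≤ p.2 i j) :
    ∀ i j, ‖(lp.map Prod.fst).prod i j‖ ≤ (lp.map Prod.snd).prod i j := by
  induction lp with
  | nil =>
    intro i j
    simp only [List.map_nil, List.prod_nil, Matrix.one_apply]
    split <;> simp
  | cons p t ih =>
    have htn : ∀ M ∈ t.map Prod.snd, ∀ i j, (0:ℝ) ≤ M i j := by
      intro M hM i j
      obtain ⟨q, hq, rfl⟩ := List.mem_map.1 hM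
      exact le_trans (norm_nonneg _) (hlp q (List.mem_cons_of_mem _ hq) i j)
    intro i j
    rw [List.map_cons, List.map_cons, List.prod_cons, List.prod_cons,
      Matrix.mul_apply, Matrix.mul_apply]
    calc ‖∑ k, p.1 i k * (t.map Prod.fst).prod k j‖
        ≤ ∑ k, ‖p.1 i k * (t.map Prod.fst).prod k j‖ :=
          norm_sum_le _ _
      _ = ∑ k, ‖p.1 i k‖ * ‖(t.map Prod.fst).prod k j‖ := by
          simp [norm_mul]
      _ ≤ ∑ k, p.2 i k * (t.map Prod.snd).prod k j := by
          refine Finset.sum_le_sum fun k _ => mul_le_mul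
            (hlp p (List.mem_cons_self) i k)
            (ih (fun q hq => hlp q (List.mem_cons_of_mem _ hq)) k j)
            (norm_nonneg _)
            (le_trans (norm_nonneg _) (hlp p (List.mem_cons_self) i k))

/-- Power version. -/
lemma aux_pow_abs_le (M : Matrix V V ℂ) (n : ℕ) :
    ∀ i j, ‖(M ^ n) i j‖ ≤
      ((Matrix.of fun i j => ‖M i j‖) ^ n) i j := by
  have := aux_prod_abs_le
    (List.replicate n (M, Matrix.of fun i j => ‖M i j‖))
    (by intro p hp i j; rw [List.eq_of_mem_replicate hp]; simp)
  simpa [List.map_replicate, List.prod_replicate] using this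

lemma aux_pow_nonneg (M : Matrix V V ℂ) (n : ℕ) :
    ∀ i j, 0 ≤ ((Matrix.of fun i j => ‖M i j‖) ^ n) i j := by
  have := aux_prod_nonneg (List.replicate n (Matrix.of fun i j => ‖M i j‖))
    (by intro N hN i j; rw [List.eq_of_mem_replicate hN]; simp [norm_nonneg])
  simpa [List.prod_replicate] using this

end Aux

/-- Let `G` be a connected finite graph, `S₁, …, S_d` graph shifts of
geodesic-width at most 1, `A` the polynomial filter with coefficients `h`, `L = L₁ + ⋯ + L_d`,
and `Â` the corresponding filter with entrywise-absolute-value shifts and coefficients `|h|`.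
For `c > 0`, the diagonal matrix `Q̂_c` with entries
`Q̂_c(i,i) = max_{j : ρ(j,i) ≤ L} max( Σ_k Â(j,k), Σ_k Â(k,j), c )` satisfies
`Q̂_c(i,i) ≥ P_A(i,i)` for every `i`, and consequently `Q̂_c − P_A` is positive
semidefinite, where `P_A` is the diagonal preconditioning matrix of `A` computed with the
geodesic-width parameter `L`. -/
theorem stmt_13 {V : Type*} [Fintype V] [DecidableEq V]
    (G : SimpleGraph V) (hG : G.Connected)
    (d : ℕ) (S : Fin d → Matrix V V ℂ)
    (hS : ∀ k i j, 1 < G.dist i j → S k i j = 0)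
    (L : Fin d → ℕ) (h : (∀ k, Fin (L k + 1)) → ℂ)
    (A : Matrix V V ℂ)
    (hA : A = ∑ l : ∀ k, Fin (L k + 1),
      h l • ((List.finRange d).map fun k => S k ^ (l k : ℕ)).prod)
    (Ahat : Matrix V V ℝ)
    (hAhat : Ahat = ∑ l : ∀ k, Fin (L k + 1),
      ‖h l‖ •
        ((List.finRange d).map fun k =>
          (Matrix.of fun i j => ‖S k i j‖) ^ (l k : ℕ)).prod)
    (c : ℝ) (hc : 0 < c) :
    (∀ i, precond G A (∑ k, L k) i ≤ qhat G Ahat (∑ k, L k) c i) ∧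
      ((Matrix.diagonal fun i => (qhat G Ahat (∑ k, L k) c i : ℂ)) -
        Matrix.diagonal fun i => (precond G A (∑ k, L k) i : ℂ)).PosSemidef := by
  -- entrywise bound |A i j| ≤ Ahat i j
  have key : ∀ i j, ‖A i j‖ ≤ Ahat i j := by
    intro i j
    rw [hA, hAhat, Matrix.sum_apply, Matrix.sum_apply]
    refine le_trans (norm_sum_le _ _) (Finset.sum_le_sum fun l _ => ?_)
    rw [Matrix.smul_apply, Matrix.smul_apply, smul_eq_mul, smul_eq_mul, norm_mul]
    refine mul_le_mul_of_nonneg_left ?_ (norm_nonneg _)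
    -- product bound
    have := aux_prod_abs_le ((List.finRange d).map fun k =>
      (S k ^ (l k : ℕ), (Matrix.of fun i j => ‖S k i j‖) ^ (l k : ℕ)))
      (by
        intro p hp i' j'
        obtain ⟨k, -, rfl⟩ := List.mem_map.1 hp
        exact aux_pow_abs_le (S k) (l k : ℕ) i' j') i j
    simpa [List.map_map, Function.comp_def] using this
  have hAhat_nonneg : ∀ i j, 0 ≤ Ahat i j := fun i j =>
    le_trans (norm_nonneg _) (key i j)
  have part1 : ∀ i, precond G A (∑ k, L k) i ≤ qhat G Ahat (∑ k, L k) c i := by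
    intro i
    unfold precond qhat
    refine Finset.sup'_le _ _ fun k hk => ?_
    refine le_trans ?_ (Finset.le_sup' _ hk)
    have h1 : (∑ j ∈ gball G k (∑ k, L k), ‖A j k‖) ≤ ∑ j, Ahat j k := by
      refine le_trans (Finset.sum_le_sum fun j _ => key j k) ?_
      exact Finset.sum_le_sum_of_subset_of_nonneg (Finset.subset_univ _)
        (fun j _ _ => hAhat_nonneg j k)
    have h2 : (∑ j ∈ gball G k (∑ k, L k), ‖A k j‖) ≤ ∑ j, Ahat k j := by
      refine le_trans (Finset.sum_le_sum fun j _ => key k j) ?_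
      exact Finset.sum_le_sum_of_subset_of_nonneg (Finset.subset_univ _)
        (fun j _ _ => hAhat_nonneg k j)
    exact max_le (le_trans h1 (le_max_of_le_left (le_max_right _ _)))
      (le_trans h2 (le_max_of_le_left (le_max_left _ _)))
  refine ⟨part1, ?_⟩
  rw [Matrix.diagonal_sub]
  refine Matrix.posSemidef_diagonal_iff.mpr fun i => ?_
  rw [← Complex.ofReal_sub, Complex.zero_le_real]
  linarith [part1 i]
end
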